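/- arXiv:2502.10274 — 7 statements merged into one kernel-verified Lean document; each statement's English description precedes it below -/
import Mathlib

section
/- Let n ≥ 1 be an integer and let α be a real number with 1 ≤ α < 2. Then I_{n,α}(σ) tends to +∞ as σ tends to 1 (through σ > 0 with σ ≠ 1). -/
open Real Filter MeasureTheory intervalIntegral

/-- `|σ - e^{iβ}| = √(σ² - 2σ cos β + 1)`. -/
noncomputable def Kker (σ β : ℝ) : ℝ := Real.sqrt (σ^2 - 2*σ*Real.cos β + 1)

/-- `I_{n,α}(σ) = (1/α) ∫_{-π}^{π} cos(nβ)/|σ - e^{iβ}|^α dβ`. -/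
noncomputable def Ifun (n : ℕ) (α σ : ℝ) : ℝ :=
  (1/α) * ∫ β in (-Real.pi)..Real.pi, Real.cos (n*β) / (Kker σ β) ^ α

lemma Kker_pos {σ : ℝ} (hσ0 : 0 < σ) (hσ1 : σ ≠ 1) (β : ℝ) : 0 < Kker σ β := by
  apply Real.sqrt_pos.mpr
  have h1 : Real.cos β ≤ 1 := Real.cos_le_one β
  rcases eq_or_lt_of_le h1 with h | h
  · have : (σ - 1)^2 > 0 := by
      have : σ - 1 ≠ 0 := sub_ne_zero.mpr hσ1
      positivity
    nlinarith
  · nlinarith [sq_nonneg (σ-1), mul_pos hσ0 (show (0:ℝ) < 1 - Real.cos β by linarith)]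

lemma Kker_cont (σ : ℝ) : Continuous (Kker σ) := by
  unfold Kker; fun_prop

lemma integrand_cont {σ : ℝ} (hσ0 : 0 < σ) (hσ1 : σ ≠ 1) (n : ℕ) {α : ℝ} (hα1 : 1 ≤ α) :
    Continuous (fun β => Real.cos (n*β) / (Kker σ β) ^ α) := by
  apply Continuous.div (by fun_prop)
  · exact (Kker_cont σ).rpow_const (fun x => Or.inl (Kker_pos hσ0 hσ1 x).ne')
  · intro x
    exact (Real.rpow_pos_of_pos (Kker_pos hσ0 hσ1 x) α).ne'

set_option maxHeartbeats 1000000 in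
lemma key (n : ℕ) {α : ℝ} (hα1 : 1 ≤ α) {δ : ℝ}
    (hδ0 : 0 < δ) (hδh : δ ≤ 1/2) (hδn : (n:ℝ) * δ ≤ π/3)
    {σ : ℝ} (hσ0 : 0 < σ) (hσ1 : σ ≠ 1) (hεδ : |σ - 1| < δ) (hε4 : |σ - 1| < 1/4) :
    (1/6) * (Real.log δ - Real.log |σ - 1|) - 2*π/(Real.sqrt (1 - Real.cos δ))^α
      ≤ ∫ β in (-π)..π, Real.cos (n*β) / (Kker σ β) ^ α := by
  have hpi : (3:ℝ) < π := by
    have := Real.pi_gt_d6; linarith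
  set ε := |σ - 1| with hεdef
  have hε0 : 0 < ε := abs_pos.mpr (sub_ne_zero.mpr hσ1)
  set c := Real.sqrt (1 - Real.cos δ) with hcdef
  have hδπ : δ ≤ π := by linarith
  have hcosδ : Real.cos δ < 1 := by
    have := Real.cos_lt_cos_of_nonneg_of_le_pi (le_refl 0) hδπ hδ0
    rwa [Real.cos_zero] at this
  have hc0 : 0 < c := Real.sqrt_pos.mpr (by linarith)
  have hca : 0 < c ^ α := Real.rpow_pos_of_pos hc0 α
  have hσlo : 3/4 < σ := by
    have := abs_lt.mp hε4; linarith [this.1]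
  have hσhi : σ < 5/4 := by
    have := abs_lt.mp hε4; linarith [this.2]
  set h : ℝ → ℝ := fun β => Real.cos (n*β) / (Kker σ β) ^ α with hhdef
  have hcont : Continuous h := integrand_cont hσ0 hσ1 n hα1
  have hKpos : ∀ β, 0 < Kker σ β := Kker_pos hσ0 hσ1
  have hKapos : ∀ β, 0 < (Kker σ β) ^ α := fun β => Real.rpow_pos_of_pos (hKpos β) α
  -- cos lower bound on |β| ≤ δ
  have hcosn : ∀ β : ℝ, |β| ≤ δ → (1:ℝ)/2 ≤ Real.cos (n*β) := by
    intro β hβ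
    have hnb : |(n:ℝ)*β| ≤ π/3 := by
      rw [abs_mul, Nat.abs_cast]
      calc (n:ℝ) * |β| ≤ (n:ℝ) * δ := by
            apply mul_le_mul_of_nonneg_left hβ (Nat.cast_nonneg n)
        _ ≤ π/3 := hδn
    have := Real.cos_le_cos_of_nonneg_of_le_pi (abs_nonneg ((n:ℝ)*β))
      (by linarith : π/3 ≤ π) hnb
    rw [Real.cos_abs, Real.cos_pi_div_three] at this
    linarith
  -- outer pointwise bound for δ ≤ |β| ≤ π
  have houter : ∀ β : ℝ, δ ≤ |β| → |β| ≤ π → -(1/c^α) ≤ h β := by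
    intro β h1 h2
    have hcosβ : Real.cos β ≤ Real.cos δ := by
      have := Real.cos_le_cos_of_nonneg_of_le_pi hδ0.le h2 h1
      rwa [Real.cos_abs] at this
    have hKc : c ≤ Kker σ β := by
      apply Real.sqrt_le_sqrt
      nlinarith [sq_nonneg (σ-1), mul_nonneg hσ0.le (sub_nonneg.mpr hcosβ),
        mul_nonneg (show (0:ℝ) ≤ σ - 3/4 by linarith)
          (show (0:ℝ) ≤ 1 - Real.cos δ by linarith)]
    have hcK : c^α ≤ (Kker σ β)^α := Real.rpow_le_rpow hc0.le hKc (by linarith)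
    have h3 : (1:ℝ)/(Kker σ β)^α ≤ 1/c^α := one_div_le_one_div_of_le hca hcK
    have h4 : (-1:ℝ)/(Kker σ β)^α ≤ Real.cos (n*β)/(Kker σ β)^α := by
      gcongr
      · exact (hKapos β).le
      · exact Real.neg_one_le_cos _
    have : -(1/c^α) ≤ (-1:ℝ)/(Kker σ β)^α := by
      rw [neg_div]
      exact neg_le_neg h3
    exact le_trans this h4
  -- inner pointwise bound on [ε, δ]
  have hinner : ∀ β : ℝ, β ∈ Set.Icc ε δ → 1/(6*β) ≤ h β := by
    intro β hβ
    obtain ⟨hβ1, hβ2⟩ := hβ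
    have hβ0 : 0 < β := lt_of_lt_of_le hε0 hβ1
    have hcb : 1 - β^2/2 ≤ Real.cos β := Real.one_sub_sq_div_two_le_cos
    have hsq : (σ-1)^2 ≤ β^2 := by
      have : |σ - 1| ≤ β := le_trans hβ1 (le_refl β)
      nlinarith [sq_abs (σ-1), abs_nonneg (σ-1)]
    have hK3 : Kker σ β ≤ 3*β := by
      have : σ^2 - 2*σ*Real.cos β + 1 ≤ (3*β)^2 := by nlinarith
      calc Kker σ β ≤ Real.sqrt ((3*β)^2) := Real.sqrt_le_sqrt this
        _ = 3*β := Real.sqrt_sq (by linarith)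
    have hK1 : Kker σ β ≤ 1 := by
      apply Real.sqrt_le_one.mpr
      nlinarith
    have hKa : (Kker σ β)^α ≤ Kker σ β := by
      have := Real.rpow_le_rpow_of_exponent_ge (hKpos β) hK1 hα1
      rwa [Real.rpow_one] at this
    have hKa3 : (Kker σ β)^α ≤ 3*β := le_trans hKa hK3
    have hc2 : (1:ℝ)/2 ≤ Real.cos (n*β) := hcosn β (by rw [abs_of_pos hβ0]; exact hβ2)
    calc 1/(6*β) = (1/2)/(3*β) := by ring
      _ ≤ (1/2)/((Kker σ β)^α) := by
          apply div_le_div_of_nonneg_left (by norm_num) (hKapos β) hKa3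
      _ ≤ Real.cos (n*β)/(Kker σ β)^α := by gcongr; exact (hKapos β).le
  -- integrability
  have hint : ∀ a b : ℝ, IntervalIntegrable h volume a b :=
    fun a b => hcont.intervalIntegrable a b
  -- split the integral
  have hδπ' : -π ≤ -δ := by linarith
  have hsplit1 : ∫ β in (-π)..π, h β =
      (∫ β in (-π)..(-δ), h β) + ∫ β in (-δ)..π, h β :=
    (integral_add_adjacent_intervals (hint _ _) (hint _ _)).symm
  have hsplit2 : ∫ β in (-δ)..π, h β =
      (∫ β in (-δ)..δ, h β) + ∫ β in δ..π, h β :=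
    (integral_add_adjacent_intervals (hint _ _) (hint _ _)).symm
  have hsplit3 : ∫ β in (-δ)..δ, h β =
      (∫ β in (-δ)..ε, h β) + ∫ β in ε..δ, h β :=
    (integral_add_adjacent_intervals (hint _ _) (hint _ _)).symm
  -- bound on [-δ, ε]
  have hnn : (0:ℝ) ≤ ∫ β in (-δ)..ε, h β := by
    apply intervalIntegral.integral_nonneg (by linarith)
    intro β hβ
    have hβδ : |β| ≤ δ := by
      rw [abs_le]; exact ⟨hβ.1, le_trans hβ.2 hεδ.le⟩
    have := hcosn β hβδ
    have := hKapos β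
    positivity
  -- bound on [ε, δ]
  have hlog : (1/6) * (Real.log δ - Real.log ε) ≤ ∫ β in ε..δ, h β := by
    have hgint : IntervalIntegrable (fun β => 1/(6*β)) volume ε δ := by
      apply ContinuousOn.intervalIntegrable
      apply ContinuousOn.div continuousOn_const (by fun_prop)
      intro x hx
      rw [Set.uIcc_of_le hεδ.le] at hx
      have : 0 < x := lt_of_lt_of_le hε0 hx.1
      positivity
    have hmono := intervalIntegral.integral_mono_on hεδ.le hgint (hint ε δ) hinner
    have hcalc : ∫ β in ε..δ, 1/(6*β) = (1/6) * (Real.log δ - Real.log ε) := by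
      have h0 : (0:ℝ) ∉ Set.uIcc ε δ := by
        rw [Set.uIcc_of_le hεδ.le]
        intro hmem
        exact absurd hmem.1 (not_le.mpr hε0)
      have : ∫ β in ε..δ, 1/(6*β) = ∫ β in ε..δ, (1/6) * (1/β) := by
        congr 1; ext β; ring
      rw [this, intervalIntegral.integral_const_mul, integral_one_div h0,
        Real.log_div (by linarith) hε0.ne']
    rw [hcalc] at hmono
    exact hmono
  -- bound on [δ, π]
  have hout1 : -(π * (1/c^α)) ≤ ∫ β in δ..π, h β := by
    have hconst : IntervalIntegrable (fun _ : ℝ => -(1/c^α)) volume δ π :=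
      intervalIntegrable_const
    have hmono := intervalIntegral.integral_mono_on hδπ hconst (hint δ π)
      (fun β hβ => houter β (by rw [abs_of_nonneg (le_trans hδ0.le hβ.1)]; exact hβ.1)
        (by rw [abs_of_nonneg (le_trans hδ0.le hβ.1)]; exact hβ.2))
    rw [intervalIntegral.integral_const, smul_eq_mul] at hmono
    have : -(π * (1/c^α)) ≤ (π - δ) * -(1/c^α) := by
      nlinarith [mul_nonneg hδ0.le (le_of_lt (show (0:ℝ) < 1/c^α by positivity))]
    linarith
  -- bound on [-π, -δ]
  have hout2 : -(π * (1/c^α)) ≤ ∫ β in (-π)..(-δ), h β := by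
    have hconst : IntervalIntegrable (fun _ : ℝ => -(1/c^α)) volume (-π) (-δ) :=
      intervalIntegrable_const
    have hmono := intervalIntegral.integral_mono_on hδπ' hconst (hint (-π) (-δ))
      (fun β hβ => by
        have hβ0 : β ≤ 0 := le_trans hβ.2 (by linarith)
        exact houter β (by rw [abs_of_nonpos hβ0]; linarith [hβ.2])
          (by rw [abs_of_nonpos hβ0]; linarith [hβ.1]))
    rw [intervalIntegral.integral_const, smul_eq_mul] at hmono
    have : -(π * (1/c^α)) ≤ (-δ - -π) * -(1/c^α) := by
      nlinarith [mul_nonneg hδ0.le (le_of_lt (show (0:ℝ) < 1/c^α by positivity))]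
    linarith
  have hfinal : 2*π/c^α = π * (1/c^α) + π * (1/c^α) := by ring
  rw [hsplit1, hsplit2, hsplit3]
  linarith

theorem stmt1 (n : ℕ) (hn : 1 ≤ n) (α : ℝ) (hα1 : 1 ≤ α) (hα2 : α < 2) :
    Filter.Tendsto (Ifun n α)
      (nhdsWithin 1 {σ : ℝ | 0 < σ ∧ σ ≠ 1}) Filter.atTop := by
  have hpi : (3:ℝ) < π := by
    have := Real.pi_gt_d6; linarith
  have hn0 : (0:ℝ) < n := by exact_mod_cast hn
  set δ : ℝ := min (π/(3*n)) (1/2) with hδdef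
  have hδ0 : 0 < δ := lt_min (by positivity) (by norm_num)
  have hδh : δ ≤ 1/2 := min_le_right _ _
  have hδn : (n:ℝ) * δ ≤ π/3 := by
    calc (n:ℝ) * δ ≤ (n:ℝ) * (π/(3*n)) :=
          mul_le_mul_of_nonneg_left (min_le_left _ _) (Nat.cast_nonneg n)
      _ = π/3 := by field_simp
  set c : ℝ := Real.sqrt (1 - Real.cos δ) with hcdef
  set L : ℝ → ℝ := fun σ => (1/6) * (Real.log δ - Real.log |σ - 1|) - 2*π/c^α with hLdef
  set S : Set ℝ := {σ : ℝ | 0 < σ ∧ σ ≠ 1} with hSdef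
  -- L tends to atTop
  have habs : Filter.Tendsto (fun σ : ℝ => |σ - 1|) (nhdsWithin 1 S) (nhdsWithin 0 (Set.Ioi 0)) := by
    rw [tendsto_nhdsWithin_iff]
    constructor
    · have : Filter.Tendsto (fun σ : ℝ => |σ - 1|) (nhds 1) (nhds 0) := by
        have : Continuous (fun σ : ℝ => |σ - 1|) := by fun_prop
        have h0 := this.tendsto 1
        simpa using h0
      exact this.mono_left nhdsWithin_le_nhds
    · filter_upwards [self_mem_nhdsWithin] with σ hσ
      exact abs_pos.mpr (sub_ne_zero.mpr hσ.2)
  have hlogbot : Filter.Tendsto (fun σ : ℝ => Real.log |σ - 1|) (nhdsWithin 1 S) Filter.atBot :=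
    Real.tendsto_log_nhdsGT_zero.comp habs
  have hLtop : Filter.Tendsto L (nhdsWithin 1 S) Filter.atTop := by
    have hneg : Filter.Tendsto (fun σ : ℝ => -Real.log |σ - 1|) (nhdsWithin 1 S)
        Filter.atTop := Filter.tendsto_neg_atBot_atTop.comp hlogbot
    have h1 : Filter.Tendsto (fun σ : ℝ => Real.log δ - Real.log |σ - 1|)
        (nhdsWithin 1 S) Filter.atTop := by
      have := Filter.tendsto_atTop_add_const_left (nhdsWithin (1:ℝ) S) (Real.log δ) hneg
      simpa [sub_eq_add_neg] using this
    have h2 := (h1.const_mul_atTop (by norm_num : (0:ℝ) < 1/6))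
    simpa [hLdef, sub_eq_add_neg] using
      Filter.tendsto_atTop_add_const_right _ (-(2*π/c^α)) h2
  -- J tends to atTop
  have hJ : Filter.Tendsto (fun σ => ∫ β in (-π)..π, Real.cos (n*β) / (Kker σ β) ^ α)
      (nhdsWithin 1 S) Filter.atTop := by
    apply Filter.tendsto_atTop_mono' _ _ hLtop
    have hball : ∀ᶠ σ : ℝ in nhdsWithin 1 S, |σ - 1| < min δ (1/4) := by
      apply Filter.Eventually.filter_mono nhdsWithin_le_nhds
      have : Metric.ball (1:ℝ) (min δ (1/4)) ∈ nhds (1:ℝ) :=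
        Metric.ball_mem_nhds 1 (lt_min hδ0 (by norm_num))
      filter_upwards [this] with σ hσ
      rwa [Metric.mem_ball, Real.dist_eq] at hσ
    filter_upwards [hball, self_mem_nhdsWithin] with σ hσball hσS
    exact key n hα1 hδ0 hδh hδn hσS.1 hσS.2
      (lt_of_lt_of_le hσball (min_le_left _ _))
      (lt_of_lt_of_le hσball (min_le_right _ _))
  have := hJ.const_mul_atTop (show (0:ℝ) < 1/α by positivity)
  exact this
end

section
/- Let n ≥ 1 be an integer and let α be a real number with 0 < α < 1. Then there exists a constant C > 0 such that for every σ > 0 with 0 < |σ − 1| ≤ 1/2 the function I_{n,α} is differentiable at σ with |I_{n,α}′(σ)| ≤ C·|1 − σ|^{−α}; consequently |I_{n,α}(σ) − I_{n,α}(1)| ≤ C·|1 − σ|^{1−α}/(1 − α) for all σ with 0 < |σ − 1| ≤ 1/2. -/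
open Real MeasureTheory Set Filter intervalIntegral
open scoped Topology Interval

namespace Stmt2Aux

noncomputable def Qf (σ β : ℝ) : ℝ := σ^2 - 2*σ*Real.cos β + 1
noncomputable def Kker' (σ β : ℝ) : ℝ := Real.sqrt (Qf σ β)
noncomputable def Gf (n : ℕ) (α σ β : ℝ) : ℝ := Real.cos (n*β) * Qf σ β ^ (-(α/2))
noncomputable def Gf' (n : ℕ) (α σ β : ℝ) : ℝ :=
  Real.cos (n*β) * ((2*σ - 2*Real.cos β) * (-(α/2)) * Qf σ β ^ (-(α/2) - 1))

lemma Qf_nonneg (σ β : ℝ) : 0 ≤ Qf σ β := by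
  have h1 := Real.neg_one_le_cos β
  have h2 := Real.cos_le_one β
  unfold Qf
  nlinarith [sq_nonneg (σ - Real.cos β)]

lemma sub_sq_le_Qf (σ β : ℝ) (hσ : 0 ≤ σ) : (σ-1)^2 ≤ Qf σ β := by
  have h2 := Real.cos_le_one β
  unfold Qf
  nlinarith

lemma diff_sq_le_Qf (σ β : ℝ) : (σ - Real.cos β)^2 ≤ Qf σ β := by
  have h2 := Real.cos_le_one β
  have h1 := Real.neg_one_le_cos β
  unfold Qf
  nlinarith

lemma beta_sq_le_Qf {σ β : ℝ} (hσ : 1/4 ≤ σ) (hβ : |β| ≤ π) : (β/π)^2 ≤ Qf σ β := by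
  have h := Real.cos_le_one_sub_mul_cos_sq hβ
  have hπ := Real.pi_pos
  have hπ2 : (0:ℝ) < π^2 := by positivity
  rw [div_pow, div_le_iff₀ hπ2]
  have h' := mul_le_mul_of_nonneg_left h (le_of_lt hπ2)
  unfold Qf
  have hmul : (0:ℝ) ≤ (σ - 1/4) * β^2 := mul_nonneg (by linarith) (sq_nonneg β)
  have hd : π^2 * (2/π^2 * β^2) = 2*β^2 := by field_simp
  nlinarith [sq_nonneg (σ-1), sq_nonneg β]

lemma Kker_sqrt (σ β : ℝ) : Kker σ β = Kker' σ β := rfl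

lemma abs_sub_le_Kker {σ : ℝ} (β : ℝ) (hσ : 0 ≤ σ) : |σ - 1| ≤ Kker' σ β :=
  Real.abs_le_sqrt (sub_sq_le_Qf σ β hσ)

lemma abs_diff_le_Kker (σ β : ℝ) : |σ - Real.cos β| ≤ Kker' σ β :=
  Real.abs_le_sqrt (diff_sq_le_Qf σ β)

lemma abs_div_pi_le_Kker {σ β : ℝ} (hσ : 1/4 ≤ σ) (hβ : |β| ≤ π) : |β|/π ≤ Kker' σ β := by
  have hπ := Real.pi_pos
  have : |β|/π = |β/π| := by rw [abs_div, abs_of_pos hπ]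
  rw [this]
  exact Real.abs_le_sqrt (beta_sq_le_Qf hσ hβ)

lemma Qf_pos {σ : ℝ} (β : ℝ) (hσ : 0 ≤ σ) (hσ1 : σ ≠ 1) : 0 < Qf σ β := by
  have h := sub_sq_le_Qf σ β hσ
  have : (0:ℝ) < (σ-1)^2 := by
    have : σ - 1 ≠ 0 := sub_ne_zero.mpr hσ1
    positivity
  linarith

lemma Ifun_eq (n : ℕ) (α σ : ℝ) : Ifun n α σ = (1/α) * ∫ β in (-π)..π, Gf n α σ β := by
  unfold Ifun
  congr 1
  apply intervalIntegral.integral_congr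
  intro β _
  have hQ : 0 ≤ Qf σ β := Qf_nonneg σ β
  show Real.cos (n*β) / Kker σ β ^ α = Gf n α σ β
  unfold Gf
  rw [Kker_sqrt, Kker', Real.sqrt_eq_rpow, ← Real.rpow_mul hQ, div_eq_mul_inv,
    ← Real.rpow_neg hQ, show -(1/2*α) = -(α/2) by ring]

lemma hasDerivAt_Gf (n : ℕ) (α : ℝ) {σ : ℝ} (β : ℝ) (hQ : Qf σ β ≠ 0) :
    HasDerivAt (fun s => Gf n α s β) (Gf' n α σ β) σ := by
  have h1 : HasDerivAt (fun s : ℝ => Qf s β) (2*σ - 2*Real.cos β) σ := by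
    have h := (((hasDerivAt_id σ).pow 2).sub ((hasDerivAt_id σ).const_mul (2*Real.cos β))).add_const 1
    convert h using 1
    · rfl
    · rfl
    · funext s; unfold Qf; simp; ring
    · simp
  have h2 := h1.rpow_const (p := -(α/2)) (Or.inl hQ)
  exact h2.const_mul (Real.cos (n*β))

lemma Kker_rpow (σ β : ℝ) (z : ℝ) : Qf σ β ^ ((1/2)*z) = Kker' σ β ^ z := by
  rw [Kker', Real.sqrt_eq_rpow, ← Real.rpow_mul (Qf_nonneg σ β)]

lemma Gf'_bound {α σ β δ : ℝ} (hα0 : 0 < α) (hσ : 1/4 ≤ σ) (hδ0 : 0 < δ)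
    (hδ : δ ≤ |σ - 1|) (hβ : |β| ≤ π) (n : ℕ) :
    |Gf' n α σ β| ≤ α * (2*π) ^ (1+α) * (max δ |β|) ^ (-(1+α)) := by
  have hπ := Real.pi_pos
  have hQ0 : 0 ≤ Qf σ β := Qf_nonneg σ β
  have hσ0 : (0:ℝ) ≤ σ := by linarith
  have hKδ : δ ≤ Kker' σ β := le_trans hδ (abs_sub_le_Kker β hσ0)
  have hKpos : 0 < Kker' σ β := lt_of_lt_of_le hδ0 hKδ
  have hm0 : 0 < max δ |β| := lt_max_of_lt_left hδ0
  have hK : max δ |β| / (2*π) ≤ Kker' σ β := by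
    rw [div_le_iff₀ (by positivity)]
    apply max_le
    · calc δ ≤ Kker' σ β := hKδ
        _ ≤ Kker' σ β * (2*π) := le_mul_of_one_le_right hKpos.le (by nlinarith [Real.pi_gt_three])
    · have h := abs_div_pi_le_Kker hσ hβ
      rw [div_le_iff₀ hπ] at h
      calc |β| ≤ Kker' σ β * π := h
        _ ≤ Kker' σ β * (2*π) := by nlinarith
  have hQpos : 0 < Qf σ β := by
    have h := Real.sqrt_pos.mp (show 0 < Real.sqrt (Qf σ β) from hKpos)
    exact h
  have h1 : |Gf' n α σ β| ≤ α * |σ - Real.cos β| * Qf σ β ^ (-(α/2) - 1) := by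
    unfold Gf'
    rw [abs_mul, abs_mul, abs_mul]
    have e1 : |Real.cos (n*β)| ≤ 1 := Real.abs_cos_le_one _
    have e2 : |2*σ - 2*Real.cos β| = 2 * |σ - Real.cos β| := by
      rw [show 2*σ - 2*Real.cos β = 2*(σ - Real.cos β) by ring, abs_mul, abs_two]
    have e3 : |(-(α/2))| = α/2 := by rw [abs_neg, abs_of_pos (by linarith)]
    have e4 : |Qf σ β ^ (-(α/2) - 1)| = Qf σ β ^ (-(α/2)-1) :=
      abs_of_nonneg (Real.rpow_nonneg hQ0 _)
    rw [e2, e3, e4]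
    calc |Real.cos (↑n*β)| * (2 * |σ - Real.cos β| * (α/2) * Qf σ β ^ (-(α/2)-1))
        ≤ 1 * (2 * |σ - Real.cos β| * (α/2) * Qf σ β ^ (-(α/2)-1)) := by
          apply mul_le_mul_of_nonneg_right e1 (by positivity)
      _ = α * |σ - Real.cos β| * Qf σ β ^ (-(α/2) - 1) := by ring
  have h2 : α * |σ - Real.cos β| * Qf σ β ^ (-(α/2) - 1) ≤ α * Kker' σ β ^ (-(1+α)) := by
    have hd := abs_diff_le_Kker σ β
    have e5 : Kker' σ β * Qf σ β ^ (-(α/2) - 1) = Kker' σ β ^ (-(1+α)) := by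
      have : Kker' σ β = Qf σ β ^ ((1/2 : ℝ)) := by
        rw [Kker', Real.sqrt_eq_rpow]
      rw [this, ← Real.rpow_add hQpos, show (1/2 : ℝ) + (-(α/2) - 1) = (1/2)*(-(1+α)) by ring,
        Kker_rpow]
      rw [this]
    calc α * |σ - Real.cos β| * Qf σ β ^ (-(α/2) - 1)
        ≤ α * Kker' σ β * Qf σ β ^ (-(α/2) - 1) := by
          apply mul_le_mul_of_nonneg_right (by nlinarith) (Real.rpow_nonneg hQ0 _)
      _ = α * (Kker' σ β * Qf σ β ^ (-(α/2) - 1)) := by ring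
      _ = α * Kker' σ β ^ (-(1+α)) := by rw [e5]
  have h3 : Kker' σ β ^ (-(1+α)) ≤ (2*π) ^ (1+α) * (max δ |β|) ^ (-(1+α)) := by
    have hstep := Real.rpow_le_rpow_of_nonpos (by positivity) hK (by linarith : -(1+α) ≤ 0)
    calc Kker' σ β ^ (-(1+α)) ≤ (max δ |β| / (2*π)) ^ (-(1+α)) := hstep
      _ = (max δ |β|) ^ (-(1+α)) / (2*π) ^ (-(1+α)) := Real.div_rpow hm0.le (by positivity) _
      _ = (2*π) ^ (1+α) * (max δ |β|) ^ (-(1+α)) := by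
          rw [Real.rpow_neg (by positivity : (0:ℝ) ≤ 2*π), div_eq_mul_inv, inv_inv]
          ring_nf
  calc |Gf' n α σ β| ≤ α * Kker' σ β ^ (-(1+α)) := le_trans h1 h2
    _ ≤ α * ((2*π) ^ (1+α) * (max δ |β|) ^ (-(1+α))) :=
        mul_le_mul_of_nonneg_left h3 hα0.le
    _ = α * (2*π) ^ (1+α) * (max δ |β|) ^ (-(1+α)) := by ring

lemma integral_max_bound {α δ : ℝ} (hα0 : 0 < α) (hδ0 : 0 < δ) (hδπ : δ ≤ π) :
    ∫ β in (-π)..π, (max δ |β|) ^ (-(1+α)) ≤ (2 + 2/α) * δ ^ (-α) := by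
  have hπ := Real.pi_pos
  set f : ℝ → ℝ := fun β => (max δ |β|) ^ (-(1+α)) with hf
  have hcont : Continuous f := by
    apply (continuous_const.max continuous_abs).rpow_const
    intro x
    exact Or.inl (ne_of_gt (lt_max_of_lt_left hδ0))
  have hii : ∀ a b : ℝ, IntervalIntegrable f volume a b := fun a b => hcont.intervalIntegrable a b
  have e1 := integral_add_adjacent_intervals (μ := volume) (f := f) (hii (-π) (-δ)) (hii (-δ) δ)
  have e2 := integral_add_adjacent_intervals (μ := volume) (f := f) (hii (-π) δ) (hii δ π)
  have hmid : (∫ β in (-δ)..δ, f β) = 2 * δ ^ (-α) := by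
    have : (∫ β in (-δ)..δ, f β) = ∫ β in (-δ)..δ, δ ^ (-(1+α)) := by
      apply intervalIntegral.integral_congr
      intro β hβ
      rw [Set.uIcc_of_le (by linarith : -δ ≤ δ)] at hβ
      have : |β| ≤ δ := abs_le.mpr ⟨hβ.1, hβ.2⟩
      simp [hf, max_eq_left this]
    rw [this, intervalIntegral.integral_const, smul_eq_mul]
    rw [show δ - -δ = 2*δ by ring, mul_assoc]
    congr 1
    rw [show δ * δ ^ (-(1+α)) = δ ^ (1:ℝ) * δ ^ (-(1+α)) by rw [Real.rpow_one],
      ← Real.rpow_add hδ0, show (1:ℝ) + -(1+α) = -α by ring]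
  have hright : (∫ β in δ..π, f β) ≤ δ ^ (-α) / α := by
    have hcg : (∫ β in δ..π, f β) = ∫ β in δ..π, β ^ (-(1+α)) := by
      apply intervalIntegral.integral_congr
      intro β hβ
      rw [Set.uIcc_of_le hδπ] at hβ
      have h1 : δ ≤ β := hβ.1
      have h2 : (0:ℝ) < β := lt_of_lt_of_le hδ0 h1
      simp [hf, abs_of_pos h2, max_eq_right h1]
    have hne : -(1+α) ≠ -1 := by intro h; nlinarith
    have h0 : (0:ℝ) ∉ [[δ, π]] := by
      rw [Set.uIcc_of_le hδπ]; intro h; exact absurd h.1 (by linarith)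
    rw [hcg, integral_rpow (Or.inr ⟨hne, h0⟩), show -(1+α) + 1 = -α by ring]
    have hπa : 0 ≤ π ^ (-α) := Real.rpow_nonneg hπ.le _
    have hδa : 0 < δ ^ (-α) := Real.rpow_pos_of_pos hδ0 _
    have hrw : (π ^ (-α) - δ ^ (-α)) / (-α) = (δ ^ (-α) - π ^ (-α)) / α := by
      rw [div_neg, ← neg_div]; ring_nf
    rw [hrw]
    exact (div_le_div_iff_of_pos_right hα0).mpr (by linarith)
  have hleft : (∫ β in (-π)..(-δ), f β) ≤ δ ^ (-α) / α := by
    have : (∫ β in (-π)..(-δ), f β) = ∫ β in δ..π, f β := by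
      rw [← intervalIntegral.integral_comp_neg f]
      apply intervalIntegral.integral_congr
      intro β _
      simp [hf]
    rw [this]; exact hright
  have htot : (∫ β in (-π)..π, f β) =
      (∫ β in (-π)..(-δ), f β) + (∫ β in (-δ)..δ, f β) + ∫ β in δ..π, f β := by
    rw [e1, e2]
  rw [htot, hmid]
  have hδa : 0 < δ ^ (-α) := Real.rpow_pos_of_pos hδ0 _
  have : (2 + 2/α) * δ ^ (-α) = δ ^ (-α)/α + 2 * δ ^ (-α) + δ ^ (-α)/α := by
    field_simp; ring
  rw [this]
  linarith

lemma Qf_cont (x : ℝ) : Continuous (fun β => Qf x β) := by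
  unfold Qf; fun_prop

lemma Gf_cont (n : ℕ) (α x : ℝ) (hx : ∀ β, Qf x β ≠ 0) :
    Continuous (fun β => Gf n α x β) := by
  unfold Gf
  exact (Real.continuous_cos.comp (continuous_const.mul continuous_id)).mul
    ((Qf_cont x).rpow_const (fun β => Or.inl (hx β)))

lemma Gf'_cont (n : ℕ) (α x : ℝ) (hx : ∀ β, Qf x β ≠ 0) :
    Continuous (fun β => Gf' n α x β) := by
  unfold Gf'
  exact (Real.continuous_cos.comp (continuous_const.mul continuous_id)).mul
    (((continuous_const.sub (continuous_const.mul Real.continuous_cos)).mul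
      continuous_const).mul ((Qf_cont x).rpow_const (fun β => Or.inl (hx β))))

lemma key (n : ℕ) {α : ℝ} (hα0 : 0 < α) (hα1 : α < 1) {σ : ℝ} (hσ0 : 0 < σ)
    (h1 : 0 < |σ - 1|) (h2 : |σ - 1| ≤ 1/2) :
    HasDerivAt (Ifun n α) ((1/α) * ∫ β in (-π)..π, Gf' n α σ β) σ ∧
      |(1/α) * ∫ β in (-π)..π, Gf' n α σ β| ≤
        ((2*π)^(2:ℝ) * ((2+2/α) * 2)) * |σ - 1| ^ (-α) := by
  have hπ := Real.pi_pos
  have hπ3 := Real.pi_gt_three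
  set δ := |σ - 1|/2 with hδdef
  have hδ0 : 0 < δ := by positivity
  have hδ14 : δ ≤ 1/4 := by rw [hδdef]; linarith
  have hσhalf : 1/2 ≤ σ := by
    have := (abs_le.mp h2).1; linarith
  have hball : ∀ x ∈ Metric.ball σ δ, 1/4 ≤ x ∧ δ ≤ |x - 1| := by
    intro x hx
    rw [Metric.mem_ball, Real.dist_eq] at hx
    have habs := abs_lt.mp hx
    constructor
    · linarith
    · have htri : |σ - 1| ≤ |σ - x| + |x - 1| := abs_sub_le σ x 1
      rw [abs_sub_comm σ x] at htri
      linarith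
  have hQx : ∀ x ∈ Metric.ball σ δ, ∀ β, 0 < Qf x β := by
    intro x hx β
    obtain ⟨hx4, hx1⟩ := hball x hx
    refine Qf_pos β (by linarith) ?_
    intro h
    rw [h] at hx1; simp at hx1; linarith
  have hQxne : ∀ x ∈ Metric.ball σ δ, ∀ β, Qf x β ≠ 0 :=
    fun x hx β => (hQx x hx β).ne'
  have hσmem : σ ∈ Metric.ball σ δ := Metric.mem_ball_self hδ0
  set bound : ℝ → ℝ := fun β => α * (2*π)^(1+α) * (max δ |β|) ^ (-(1+α)) with hbdef
  have hboundc : Continuous bound := by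
    apply continuous_const.mul
    exact (continuous_const.max continuous_abs).rpow_const
      (fun x => Or.inl (ne_of_gt (lt_max_of_lt_left hδ0)))
  have hmemball : ∀ t : ℝ, t ∈ Ι (-π) π → |t| ≤ π := by
    intro t ht
    rw [Set.uIoc_of_le (by linarith : -π ≤ π)] at ht
    exact abs_le.mpr ⟨ht.1.le, ht.2⟩
  have H := intervalIntegral.hasDerivAt_integral_of_dominated_loc_of_deriv_le
    (𝕜 := ℝ) (μ := volume) (a := -π) (b := π)
    (F := fun x β => Gf n α x β) (F' := fun x β => Gf' n α x β) (x₀ := σ)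
    (bound := bound) (Metric.ball_mem_nhds σ hδ0)
    (Filter.eventually_of_mem (Metric.ball_mem_nhds σ hδ0)
      (fun x hx => (Gf_cont n α x (hQxne x hx)).aestronglyMeasurable))
    ((Gf_cont n α σ (hQxne σ hσmem)).intervalIntegrable _ _)
    ((Gf'_cont n α σ (hQxne σ hσmem)).aestronglyMeasurable)
    (ae_of_all _ (fun t ht x hx => by
      rw [Real.norm_eq_abs]
      exact Gf'_bound hα0 (hball x hx).1 hδ0 (hball x hx).2 (hmemball t ht) n))
    (hboundc.intervalIntegrable _ _)
    (ae_of_all _ (fun t ht x hx => hasDerivAt_Gf n α t (hQxne x hx t)))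
  have hIfun : Ifun n α = fun x => (1/α) * ∫ β in (-π)..π, Gf n α x β :=
    funext (Ifun_eq n α)
  constructor
  · rw [hIfun]
    exact H.2.const_mul (1/α)
  · have hae : ∀ᵐ t ∂(volume.restrict (Ι (-π) π)), ‖Gf' n α σ t‖ ≤ bound t :=
      (ae_restrict_iff' measurableSet_uIoc).mpr (ae_of_all _ (fun t ht => by
        rw [Real.norm_eq_abs]
        exact Gf'_bound hα0 (hball σ hσmem).1 hδ0 (hball σ hσmem).2 (hmemball t ht) n))
    have hb1 : |∫ β in (-π)..π, Gf' n α σ β| ≤ |∫ β in (-π)..π, bound β| := by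
      have h := intervalIntegral.norm_integral_le_abs_of_norm_le hae
        (hboundc.intervalIntegrable _ _)
      simpa [Real.norm_eq_abs] using h
    have hbint : (∫ β in (-π)..π, bound β)
        = (α * (2*π)^(1+α)) * ∫ β in (-π)..π, (max δ |β|) ^ (-(1+α)) := by
      simp only [hbdef]
      rw [intervalIntegral.integral_const_mul]
    have hnonneg : 0 ≤ ∫ β in (-π)..π, bound β := by
      apply intervalIntegral.integral_nonneg (by linarith : -π ≤ π)
      intro t _
      simp only [hbdef]
      have h1' : 0 ≤ (max δ |t|) ^ (-(1+α)) :=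
        Real.rpow_nonneg (le_trans hδ0.le (le_max_left _ _)) _
      have h2' : 0 ≤ (2*π)^(1+α) := Real.rpow_nonneg (by positivity) _
      positivity
    have hmax := integral_max_bound (α := α) hα0 hδ0 (by linarith : δ ≤ π)
    have hdr : δ ^ (-α) = |σ-1| ^ (-α) * 2^α := by
      rw [hδdef, Real.div_rpow h1.le (by norm_num : (0:ℝ) ≤ 2),
        Real.rpow_neg (by norm_num : (0:ℝ) ≤ 2), div_eq_mul_inv, inv_inv]
    have k1 : (2*π)^(1+α) ≤ (2*π)^(2:ℝ) :=
      Real.rpow_le_rpow_of_exponent_le (by linarith) (by linarith)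
    have k2 : (2:ℝ)^α ≤ 2 := by
      calc (2:ℝ)^α ≤ (2:ℝ)^(1:ℝ) := Real.rpow_le_rpow_of_exponent_le one_le_two hα1.le
        _ = 2 := Real.rpow_one 2
    have k3 : (2*π)^(1+α) * (2:ℝ)^α ≤ (2*π)^(2:ℝ) * 2 :=
      mul_le_mul k1 k2 (Real.rpow_pos_of_pos two_pos α).le
        (Real.rpow_nonneg (by positivity) _)
    have k4 : (0:ℝ) ≤ (2+2/α) * |σ-1|^(-α) :=
      mul_nonneg (by positivity) (Real.rpow_nonneg (abs_nonneg _) _)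
    have hα' : (0:ℝ) < 1/α := by positivity
    calc |(1/α) * ∫ β in (-π)..π, Gf' n α σ β|
        = (1/α) * |∫ β in (-π)..π, Gf' n α σ β| := by
          rw [abs_mul, abs_of_pos hα']
      _ ≤ (1/α) * |∫ β in (-π)..π, bound β| := mul_le_mul_of_nonneg_left hb1 hα'.le
      _ = (1/α) * ∫ β in (-π)..π, bound β := by rw [abs_of_nonneg hnonneg]
      _ = (2*π)^(1+α) * ∫ β in (-π)..π, (max δ |β|) ^ (-(1+α)) := by
          rw [hbint]; field_simp
      _ ≤ (2*π)^(1+α) * ((2+2/α) * δ^(-α)) := by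
          apply mul_le_mul_of_nonneg_left hmax (Real.rpow_nonneg (by positivity) _)
      _ = ((2*π)^(1+α) * 2^α) * ((2+2/α) * |σ-1|^(-α)) := by rw [hdr]; ring
      _ ≤ ((2*π)^(2:ℝ) * 2) * ((2+2/α) * |σ-1|^(-α)) := mul_le_mul_of_nonneg_right k3 k4
      _ = ((2*π)^(2:ℝ) * ((2+2/α) * 2)) * |σ - 1| ^ (-α) := by ring

lemma tendsto_Ifun (n : ℕ) {α : ℝ} (hα0 : 0 < α) (hα1 : α < 1) :
    Tendsto (Ifun n α) (𝓝[Set.Ioo (1/2 : ℝ) (3/2)] 1) (𝓝 (Ifun n α 1)) := by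
  have hπ := Real.pi_pos
  set l := 𝓝[Set.Ioo (1/2 : ℝ) (3/2)] (1:ℝ) with hl
  set boundc : ℝ → ℝ := fun β => (|β|/π) ^ (-α) with hbc
  have i1 : IntervalIntegrable (fun β : ℝ => β ^ (-α)) volume 0 π :=
    intervalIntegrable_rpow' (by linarith)
  have i2 : IntervalIntegrable (fun β : ℝ => |β| ^ (-α)) volume 0 π := by
    rw [intervalIntegrable_iff] at i1 ⊢
    refine i1.congr ?_
    refine (ae_restrict_iff' measurableSet_uIoc).mpr (ae_of_all _ (fun x hx => ?_))
    rw [Set.uIoc_of_le hπ.le] at hx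
    show x ^ (-α) = |x| ^ (-α)
    rw [abs_of_pos hx.1]
  have i3 : IntervalIntegrable (fun β : ℝ => |β| ^ (-α)) volume (-π) 0 := by
    have h := (IntervalIntegrable.iff_comp_neg (f := fun β : ℝ => |β| ^ (-α)) (a := 0) (b := π)).mp i2
    simp only [abs_neg, neg_zero] at h
    exact h.symm
  have i4 : IntervalIntegrable (fun β : ℝ => |β| ^ (-α)) volume (-π) π := i3.trans i2
  have i5 : IntervalIntegrable boundc volume (-π) π := by
    have hrw : boundc = fun β => |β| ^ (-α) * (π^(α:ℝ)) := by
      funext β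
      show (|β|/π) ^ (-α) = |β| ^ (-α) * (π^(α:ℝ))
      rw [Real.div_rpow (abs_nonneg β) hπ.le, Real.rpow_neg hπ.le, div_eq_mul_inv, inv_inv]
    rw [hrw]
    exact i4.mul_const _
  have hne : ∀ᵐ (β:ℝ) ∂(volume : Measure ℝ), β ≠ 0 := by
    have h0 : {β : ℝ | ¬ β ≠ 0} = {0} := by ext x; simp
    rw [ae_iff, h0]
    exact Real.volume_singleton
  have hGmeas : ∀ x : ℝ, AEStronglyMeasurable (fun β => Gf n α x β)
      (volume.restrict (Ι (-π) π)) := by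
    intro x
    have m1 : Measurable fun β : ℝ => Real.cos (n*β) :=
      (Real.continuous_cos.comp (continuous_const.mul continuous_id)).measurable
    have m2 : Measurable fun β : ℝ => (x^2 - 2*x*Real.cos β + 1) := by fun_prop
    have m3 : Measurable (fun y : ℝ => y ^ (-(α/2))) := by measurability
    exact (m1.mul (m3.comp m2)).aestronglyMeasurable
  have habs : ∀ t : ℝ, t ∈ Ι (-π) π → |t| ≤ π := by
    intro t ht
    rw [Set.uIoc_of_le (by linarith : -π ≤ π)] at ht
    exact abs_le.mpr ⟨ht.1.le, ht.2⟩
  have hkey : Tendsto (fun x => ∫ β in (-π)..π, Gf n α x β) l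
      (𝓝 (∫ β in (-π)..π, Gf n α 1 β)) := by
    apply intervalIntegral.tendsto_integral_filter_of_dominated_convergence boundc
      (Filter.Eventually.of_forall hGmeas)
    · filter_upwards [self_mem_nhdsWithin] with x hx
      filter_upwards [hne] with β hβ0
      intro hβ
      obtain ⟨hx1, hx2⟩ := hx
      have hβπ := habs β hβ
      have hβpos : 0 < |β| := abs_pos.mpr hβ0
      have hbase : 0 < |β|/π := by positivity
      have hK := abs_div_pi_le_Kker (σ := x) (β := β) (by linarith) hβπ
      have hQ0 : 0 ≤ Qf x β := Qf_nonneg x β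
      have hstep : Qf x β ^ (-(α/2)) ≤ (|β|/π) ^ (-α) := by
        rw [show -(α/2) = (1/2)*(-α) by ring, Kker_rpow]
        exact Real.rpow_le_rpow_of_nonpos hbase hK (by linarith)
      rw [Real.norm_eq_abs]
      calc |Gf n α x β| = |Real.cos (n*β)| * |Qf x β ^ (-(α/2))| := by
            unfold Gf; rw [abs_mul]
        _ ≤ 1 * (Qf x β ^ (-(α/2))) := by
            rw [abs_of_nonneg (Real.rpow_nonneg hQ0 _)]
            exact mul_le_mul_of_nonneg_right (Real.abs_cos_le_one _)
              (Real.rpow_nonneg hQ0 _)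
        _ = Qf x β ^ (-(α/2)) := one_mul _
        _ ≤ boundc β := hstep
    · exact i5
    · filter_upwards [hne] with β hβ0
      intro hβ
      have hβπ := habs β hβ
      have hQ1 : 0 < Qf 1 β := by
        have h := beta_sq_le_Qf (σ := (1:ℝ)) (by norm_num) hβπ
        have : (0:ℝ) < (β/π)^2 := by positivity
        linarith
      have hc : ContinuousAt (fun x => Gf n α x β) 1 := by
        have hQc : Continuous (fun x : ℝ => Qf x β) := by unfold Qf; fun_prop
        have h2 := (hQc.continuousAt (x := 1)).rpow_const (p := -(α/2)) (Or.inl hQ1.ne')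
        exact continuousAt_const.mul h2
      exact (hc.tendsto).mono_left nhdsWithin_le_nhds
  have hIfun : Ifun n α = fun x => (1/α) * ∫ β in (-π)..π, Gf n α x β :=
    funext (Ifun_eq n α)
  rw [hIfun]
  exact hkey.const_mul (1/α)

end Stmt2Aux

theorem stmt2 (n : ℕ) (hn : 1 ≤ n) (α : ℝ) (hα0 : 0 < α) (hα1 : α < 1) :
    ∃ C > (0:ℝ),
      (∀ σ : ℝ, 0 < σ → 0 < |σ - 1| → |σ - 1| ≤ 1/2 →
        DifferentiableAt ℝ (Ifun n α) σ ∧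
          |deriv (Ifun n α) σ| ≤ C * |1 - σ| ^ (-α)) ∧
      (∀ σ : ℝ, 0 < σ → 0 < |σ - 1| → |σ - 1| ≤ 1/2 →
        |Ifun n α σ - Ifun n α 1| ≤ C * |1 - σ| ^ (1 - α) / (1 - α)) := by
  classical
  open Stmt2Aux in
  have hπ := Real.pi_pos
  set C : ℝ := (2*Real.pi)^(2:ℝ) * ((2+2/α) * 2) with hC
  have hCpos : 0 < C := by
    have h1 : (0:ℝ) < (2*Real.pi)^(2:ℝ) := Real.rpow_pos_of_pos (by positivity) _
    have h2 : (0:ℝ) < 2 + 2/α := by positivity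
    positivity
  have part1 : ∀ σ : ℝ, 0 < σ → 0 < |σ - 1| → |σ - 1| ≤ 1/2 →
      DifferentiableAt ℝ (Ifun n α) σ ∧ |deriv (Ifun n α) σ| ≤ C * |1 - σ| ^ (-α) := by
    intro σ hσ0 h1 h2
    obtain ⟨hd, hb⟩ := Stmt2Aux.key n hα0 hα1 hσ0 h1 h2
    refine ⟨hd.differentiableAt, ?_⟩
    rw [hd.deriv, abs_sub_comm (1:ℝ) σ]
    exact hb
  refine ⟨C, hCpos, part1, ?_⟩
  intro σ hσ0 h1 h2
  have hσne : σ ≠ 1 := sub_ne_zero.mp (abs_pos.mp h1)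
  have hα1' : (0:ℝ) < 1 - α := by linarith
  rcases lt_or_gt_of_ne hσne with hlt | hgt
  · -- case σ < 1
    have hσhalf : 1/2 ≤ σ := by have := (abs_le.mp h2).1; linarith
    have habs1σ : |1 - σ| = 1 - σ := abs_of_pos (by linarith)
    haveI hNB : (𝓝[Set.Ioo σ 1] (1:ℝ)).NeBot := right_nhdsWithin_Ioo_neBot hlt
    have hsub : Set.Ioo σ 1 ⊆ Set.Ioo (1/2 : ℝ) (3/2) := by
      intro x hx; exact ⟨lt_of_le_of_lt hσhalf hx.1, by linarith [hx.2]⟩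
    have hT : Tendsto (Ifun n α) (𝓝[Set.Ioo σ 1] (1:ℝ)) (𝓝 (Ifun n α 1)) :=
      (Stmt2Aux.tendsto_Ifun n hα0 hα1).mono_left (nhdsWithin_mono 1 hsub)
    have hbound : ∀ᶠ σ' in 𝓝[Set.Ioo σ 1] (1:ℝ),
        |Ifun n α σ - Ifun n α σ'| ≤ C * |1 - σ| ^ (1-α) / (1-α) := by
      filter_upwards [self_mem_nhdsWithin] with σ' hσ'
      obtain ⟨hs1, hs2⟩ := hσ'
      have hkey' : ∀ t ∈ Set.uIcc σ σ', 0 < t ∧ 0 < |t-1| ∧ |t-1| ≤ 1/2 ∧ |t-1| = 1-t := by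
        intro t ht
        rw [Set.uIcc_of_le hs1.le] at ht
        have ht1 : t < 1 := lt_of_le_of_lt ht.2 hs2
        have habs : |t-1| = 1-t := by rw [abs_of_neg (by linarith : t - 1 < 0)]; ring
        refine ⟨by linarith [ht.1], ?_, ?_, habs⟩
        · rw [habs]; linarith
        · rw [habs]; linarith [ht.1]
      have hderivs : ∀ t ∈ Set.uIcc σ σ', HasDerivAt (Ifun n α) (deriv (Ifun n α) t) t := by
        intro t ht
        obtain ⟨p1, p2, p3, _⟩ := hkey' t ht
        exact ((Stmt2Aux.key n hα0 hα1 p1 p2 p3).1).differentiableAt.hasDerivAt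
      have hdbd : ∀ t ∈ Set.uIcc σ σ', |deriv (Ifun n α) t| ≤ C * (1-t) ^ (-α) := by
        intro t ht
        obtain ⟨p1, p2, p3, p4⟩ := hkey' t ht
        have h := (part1 t p1 p2 p3).2
        have habs' : |1-t| = 1-t := by rw [abs_sub_comm]; exact p4
        rwa [habs'] at h
      have hmeas : AEStronglyMeasurable (deriv (Ifun n α)) (volume.restrict (Ι σ σ')) :=
        (measurable_deriv (Ifun n α)).aestronglyMeasurable
      have hint : IntervalIntegrable (deriv (Ifun n α)) volume σ σ' := by
        rw [intervalIntegrable_iff]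
        have hM : Integrable (fun _ : ℝ => C * (1-σ')^(-α)) (volume.restrict (Ι σ σ')) := by
          apply (integrableOn_const_iff (C := C * (1-σ')^(-α))).mpr
          right
          rw [Set.uIoc_of_le hs1.le]
          exact measure_Ioc_lt_top
        refine hM.mono' hmeas ?_
        refine (ae_restrict_iff' measurableSet_uIoc).mpr (ae_of_all _ (fun t ht => ?_))
        rw [Set.uIoc_of_le hs1.le] at ht
        have htm : t ∈ Set.uIcc σ σ' := by
          rw [Set.uIcc_of_le hs1.le]; exact ⟨ht.1.le, ht.2⟩
        have h1t : 0 < 1 - σ' := by linarith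
        have hmono : (1-t)^(-α) ≤ (1-σ')^(-α) :=
          Real.rpow_le_rpow_of_nonpos h1t (by linarith [ht.2]) (by linarith)
        rw [Real.norm_eq_abs]
        calc |deriv (Ifun n α) t| ≤ C * (1-t)^(-α) := hdbd t htm
          _ ≤ C * (1-σ')^(-α) := mul_le_mul_of_nonneg_left hmono hCpos.le
      have hftc := intervalIntegral.integral_eq_sub_of_hasDerivAt hderivs hint
      have hg : IntervalIntegrable (fun t => C * (1-t)^(-α)) volume σ σ' := by
        apply ContinuousOn.intervalIntegrable
        apply ContinuousOn.mul continuousOn_const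
        apply ContinuousOn.rpow_const (continuousOn_const.sub continuousOn_id)
        intro t ht
        rw [Set.uIcc_of_le hs1.le] at ht
        exact Or.inl (ne_of_gt (by linarith [ht.2] : (0:ℝ) < 1 - t))
      have hanti : ∀ t ∈ Set.uIcc σ σ',
          HasDerivAt (fun u => -(C/(1-α)) * (1-u)^(1-α)) (C * (1-t)^(-α)) t := by
        intro t ht
        rw [Set.uIcc_of_le hs1.le] at ht
        have h1t : (0:ℝ) < 1 - t := by linarith [ht.2]
        have hd := ((hasDerivAt_id t).const_sub 1).rpow_const (p := 1-α) (Or.inl h1t.ne')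
        have hd2 := hd.const_mul (-(C/(1-α)))
        convert hd2 using 1
        · rfl
        · rfl
        · rfl
        rw [show (1:ℝ)-α-1 = -α by ring]
        field_simp
        ring
        rfl
      have hgval := intervalIntegral.integral_eq_sub_of_hasDerivAt hanti hg
      have hb2 : |Ifun n α σ' - Ifun n α σ| ≤ |∫ t in σ..σ', C * (1-t)^(-α)| := by
        rw [← hftc]
        have hae2 : ∀ᵐ t ∂(volume.restrict (Ι σ σ')),
            ‖deriv (Ifun n α) t‖ ≤ C * (1-t)^(-α) := by
          refine (ae_restrict_iff' measurableSet_uIoc).mpr (ae_of_all _ (fun t ht => ?_))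
          rw [Set.uIoc_of_le hs1.le] at ht
          have htm : t ∈ Set.uIcc σ σ' := by
            rw [Set.uIcc_of_le hs1.le]; exact ⟨ht.1.le, ht.2⟩
          rw [Real.norm_eq_abs]; exact hdbd t htm
        have h := intervalIntegral.norm_integral_le_abs_of_norm_le hae2 hg
        simpa [Real.norm_eq_abs] using h
      have hmono2 : (1-σ')^(1-α) ≤ (1-σ)^(1-α) :=
        Real.rpow_le_rpow (by linarith) (by linarith) (by linarith)
      have hnn : 0 ≤ (1-σ')^(1-α) := Real.rpow_nonneg (by linarith) _
      have hfrac : 0 ≤ C/(1-α) := div_nonneg hCpos.le (by linarith)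
      have hval : (∫ t in σ..σ', C * (1-t)^(-α))
          = (C/(1-α)) * ((1-σ)^(1-α) - (1-σ')^(1-α)) := by
        rw [hgval]; ring
      have hCle : |∫ t in σ..σ', C * (1-t)^(-α)| ≤ C * (1-σ)^(1-α) / (1-α) := by
        rw [hval, abs_of_nonneg (mul_nonneg hfrac (by linarith))]
        calc (C/(1-α)) * ((1-σ)^(1-α) - (1-σ')^(1-α)) ≤ (C/(1-α)) * (1-σ)^(1-α) :=
              mul_le_mul_of_nonneg_left (by linarith) hfrac
          _ = C * (1-σ)^(1-α) / (1-α) := by ring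
      rw [abs_sub_comm, habs1σ]
      exact le_trans hb2 hCle
    have hTabs : Tendsto (fun σ' => |Ifun n α σ - Ifun n α σ'|) (𝓝[Set.Ioo σ 1] (1:ℝ))
        (𝓝 |Ifun n α σ - Ifun n α 1|) := (tendsto_const_nhds.sub hT).abs
    exact le_of_tendsto hTabs hbound
  · -- case σ > 1
    have hσ32 : σ ≤ 3/2 := by have := (abs_le.mp h2).2; linarith
    have habs1σ : |1 - σ| = σ - 1 := by rw [abs_of_neg (by linarith : 1 - σ < 0)]; ring
    haveI hNB : (𝓝[Set.Ioo (1:ℝ) σ] (1:ℝ)).NeBot := left_nhdsWithin_Ioo_neBot hgt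
    have hsub : Set.Ioo (1:ℝ) σ ⊆ Set.Ioo (1/2 : ℝ) (3/2) := by
      intro x hx
      constructor
      · linarith [hx.1]
      · exact lt_of_lt_of_le hx.2 (by linarith)
    have hT : Tendsto (Ifun n α) (𝓝[Set.Ioo (1:ℝ) σ] (1:ℝ)) (𝓝 (Ifun n α 1)) :=
      (Stmt2Aux.tendsto_Ifun n hα0 hα1).mono_left (nhdsWithin_mono 1 hsub)
    have hbound : ∀ᶠ σ' in 𝓝[Set.Ioo (1:ℝ) σ] (1:ℝ),
        |Ifun n α σ - Ifun n α σ'| ≤ C * |1 - σ| ^ (1-α) / (1-α) := by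
      filter_upwards [self_mem_nhdsWithin] with σ' hσ'
      obtain ⟨hs1, hs2⟩ := hσ'
      have huIcc : Set.uIcc σ σ' = Set.Icc σ' σ := Set.uIcc_of_ge hs2.le
      have huIoc : Ι σ σ' = Set.Ioc σ' σ := by
        rw [Set.uIoc_comm, Set.uIoc_of_le hs2.le]
      have hkey' : ∀ t ∈ Set.uIcc σ σ', 0 < t ∧ 0 < |t-1| ∧ |t-1| ≤ 1/2 ∧ |t-1| = t-1 := by
        intro t ht
        rw [huIcc] at ht
        have ht1 : 1 < t := lt_of_lt_of_le hs1 ht.1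
        have habs : |t-1| = t-1 := abs_of_pos (by linarith)
        refine ⟨by linarith, ?_, ?_, habs⟩
        · rw [habs]; linarith
        · rw [habs]; linarith [ht.2]
      have hderivs : ∀ t ∈ Set.uIcc σ σ', HasDerivAt (Ifun n α) (deriv (Ifun n α) t) t := by
        intro t ht
        obtain ⟨p1, p2, p3, _⟩ := hkey' t ht
        exact ((Stmt2Aux.key n hα0 hα1 p1 p2 p3).1).differentiableAt.hasDerivAt
      have hdbd : ∀ t ∈ Set.uIcc σ σ', |deriv (Ifun n α) t| ≤ C * (t-1) ^ (-α) := by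
        intro t ht
        obtain ⟨p1, p2, p3, p4⟩ := hkey' t ht
        have h := (part1 t p1 p2 p3).2
        have habs' : |1-t| = t-1 := by rw [abs_sub_comm]; exact p4
        rwa [habs'] at h
      have hmeas : AEStronglyMeasurable (deriv (Ifun n α)) (volume.restrict (Ι σ σ')) :=
        (measurable_deriv (Ifun n α)).aestronglyMeasurable
      have hint : IntervalIntegrable (deriv (Ifun n α)) volume σ σ' := by
        rw [intervalIntegrable_iff]
        have hM : Integrable (fun _ : ℝ => C * (σ'-1)^(-α)) (volume.restrict (Ι σ σ')) := by
          apply (integrableOn_const_iff (C := C * (σ'-1)^(-α))).mpr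
          right
          rw [huIoc]
          exact measure_Ioc_lt_top
        refine hM.mono' hmeas ?_
        refine (ae_restrict_iff' measurableSet_uIoc).mpr (ae_of_all _ (fun t ht => ?_))
        rw [huIoc] at ht
        have htm : t ∈ Set.uIcc σ σ' := by rw [huIcc]; exact ⟨ht.1.le, ht.2⟩
        have h1t : 0 < σ' - 1 := by linarith
        have hmono : (t-1)^(-α) ≤ (σ'-1)^(-α) :=
          Real.rpow_le_rpow_of_nonpos h1t (by linarith [ht.1]) (by linarith)
        rw [Real.norm_eq_abs]
        calc |deriv (Ifun n α) t| ≤ C * (t-1)^(-α) := hdbd t htm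
          _ ≤ C * (σ'-1)^(-α) := mul_le_mul_of_nonneg_left hmono hCpos.le
      have hftc := intervalIntegral.integral_eq_sub_of_hasDerivAt hderivs hint
      have hg : IntervalIntegrable (fun t => C * (t-1)^(-α)) volume σ σ' := by
        apply ContinuousOn.intervalIntegrable
        apply ContinuousOn.mul continuousOn_const
        apply ContinuousOn.rpow_const (continuousOn_id.sub continuousOn_const)
        intro t ht
        rw [huIcc] at ht
        exact Or.inl (ne_of_gt (by linarith [ht.1] : (0:ℝ) < t - 1))
      have hanti : ∀ t ∈ Set.uIcc σ σ',
          HasDerivAt (fun u => (C/(1-α)) * (u-1)^(1-α)) (C * (t-1)^(-α)) t := by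
        intro t ht
        rw [huIcc] at ht
        have h1t : (0:ℝ) < t - 1 := by linarith [ht.1]
        have hd := ((hasDerivAt_id t).sub_const 1).rpow_const (p := 1-α) (Or.inl h1t.ne')
        have hd2 := hd.const_mul (C/(1-α))
        convert hd2 using 1
        · rfl
        · rfl
        · rfl
        rw [show (1:ℝ)-α-1 = -α by ring]
        field_simp
        ring
        rfl
      have hgval := intervalIntegral.integral_eq_sub_of_hasDerivAt hanti hg
      have hb2 : |Ifun n α σ' - Ifun n α σ| ≤ |∫ t in σ..σ', C * (t-1)^(-α)| := by
        rw [← hftc]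
        have hae2 : ∀ᵐ t ∂(volume.restrict (Ι σ σ')),
            ‖deriv (Ifun n α) t‖ ≤ C * (t-1)^(-α) := by
          refine (ae_restrict_iff' measurableSet_uIoc).mpr (ae_of_all _ (fun t ht => ?_))
          rw [huIoc] at ht
          have htm : t ∈ Set.uIcc σ σ' := by rw [huIcc]; exact ⟨ht.1.le, ht.2⟩
          rw [Real.norm_eq_abs]; exact hdbd t htm
        have h := intervalIntegral.norm_integral_le_abs_of_norm_le hae2 hg
        simpa [Real.norm_eq_abs] using h
      have hmono2 : (σ'-1)^(1-α) ≤ (σ-1)^(1-α) :=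
        Real.rpow_le_rpow (by linarith) (by linarith) (by linarith)
      have hnn : 0 ≤ (σ'-1)^(1-α) := Real.rpow_nonneg (by linarith) _
      have hfrac : 0 ≤ C/(1-α) := div_nonneg hCpos.le (by linarith)
      have hval : (∫ t in σ..σ', C * (t-1)^(-α))
          = (C/(1-α)) * ((σ'-1)^(1-α) - (σ-1)^(1-α)) := by
        rw [hgval]; ring
      have hCle : |∫ t in σ..σ', C * (t-1)^(-α)| ≤ C * (σ-1)^(1-α) / (1-α) := by
        rw [hval, abs_of_nonpos (mul_nonpos_of_nonneg_of_nonpos hfrac (by linarith))]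
        calc -((C/(1-α)) * ((σ'-1)^(1-α) - (σ-1)^(1-α)))
            = (C/(1-α)) * ((σ-1)^(1-α) - (σ'-1)^(1-α)) := by ring
          _ ≤ (C/(1-α)) * (σ-1)^(1-α) := mul_le_mul_of_nonneg_left (by linarith) hfrac
          _ = C * (σ-1)^(1-α) / (1-α) := by ring
      rw [abs_sub_comm, habs1σ]
      exact le_trans hb2 hCle
    have hTabs : Tendsto (fun σ' => |Ifun n α σ - Ifun n α σ'|) (𝓝[Set.Ioo (1:ℝ) σ] (1:ℝ))
        (𝓝 |Ifun n α σ - Ifun n α 1|) := (tendsto_const_nhds.sub hT).abs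
    exact le_of_tendsto hTabs hbound
end

section
/- Let n ≥ 2 be an integer and let α be a real number with 0 < α < 3 and α ≠ 1. Then J_{n,α}(1) = D_α · (1 − F_n(α))/(1 − α). -/
open Real MeasureTheory intervalIntegral Set Filter

/-- `J_{n,α}(σ) = (1/α) ∫_{-π}^{π} (cos β - cos(nβ))/|σ - e^{iβ}|^α dβ`. -/
noncomputable def Jfun (n : ℕ) (α σ : ℝ) : ℝ :=
  (1/α) * ∫ β in (-Real.pi)..Real.pi, (Real.cos β - Real.cos (n*β)) / (Kker σ β) ^ α

/-- `D_α = (2√π/2^α) Γ((3-α)/2)/Γ(2-α/2)`. -/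
noncomputable def Dconst (α : ℝ) : ℝ :=
  (2 * Real.sqrt Real.pi / (2:ℝ) ^ α) * Real.Gamma ((3-α)/2) / Real.Gamma (2 - α/2)

/-- `F_n(α) = ∏_{k=1}^{n-1} (2k+α)/(2k+2-α)`. -/
noncomputable def Ffun (n : ℕ) (α : ℝ) : ℝ :=
  ∏ k ∈ Finset.Icc 1 (n-1), (2*(k:ℝ)+α)/(2*(k:ℝ)+(2-α))


lemma abs_sin_nat_mul_le (k : ℕ) (x : ℝ) : |Real.sin (k * x)| ≤ k * |Real.sin x| := by
  induction k with
  | zero => simp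
  | succ k ih =>
    have h : ((k:ℝ)+1) * x = k*x + x := by ring
    push_cast
    rw [h, Real.sin_add]
    calc |Real.sin (k*x) * Real.cos x + Real.cos (k*x) * Real.sin x|
        ≤ |Real.sin (k*x) * Real.cos x| + |Real.cos (k*x) * Real.sin x| := abs_add_le _ _
      _ ≤ |Real.sin (k*x)| + |Real.sin x| := by
          rw [abs_mul, abs_mul]
          nlinarith [Real.abs_cos_le_one x, Real.abs_cos_le_one ((k:ℝ)*x),
            abs_nonneg (Real.sin ((k:ℝ)*x)), abs_nonneg (Real.sin x)]
      _ ≤ ((k:ℝ)+1) * |Real.sin x| := by nlinarith [abs_nonneg (Real.sin x)]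

lemma intInt_sin_rpow {c : ℝ} (hc : -1 < c) :
    IntervalIntegrable (fun θ : ℝ => Real.sin θ ^ c) volume 0 (π/2) := by
  have hpi := Real.pi_pos
  rw [intervalIntegrable_iff_integrableOn_Ioc_of_le (by positivity)]
  have hmeas : AEStronglyMeasurable (fun θ : ℝ => Real.sin θ ^ c)
      (volume.restrict (Ioc 0 (π/2))) :=
    (Real.measurable_sin.pow_const c).aestronglyMeasurable
  have hint : IntegrableOn (fun θ : ℝ => (2/π)^c * θ^c + 1) (Ioc 0 (π/2)) volume := by
    apply Integrable.add
    · exact (((intervalIntegrable_rpow' hc (a := 0) (b := π/2)).1).mono_set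
        (by simp [Ioc_subset_Ioc_right, le_refl])).const_mul _ |>.congr (by rfl)
    · exact integrableOn_const measure_Ioc_lt_top.ne
  refine hint.mono' hmeas ?_
  filter_upwards [ae_restrict_mem measurableSet_Ioc] with θ hθ
  have h0 : 0 < θ := hθ.1
  have h2 : θ ≤ π/2 := hθ.2
  have hs : 0 < Real.sin θ := Real.sin_pos_of_pos_of_lt_pi h0 (lt_of_le_of_lt h2 (by linarith))
  rw [Real.norm_eq_abs, abs_of_nonneg (Real.rpow_nonneg hs.le _)]
  rcases le_or_gt 0 c with h | h
  · have : Real.sin θ ^ c ≤ 1 := Real.rpow_le_one hs.le (Real.sin_le_one θ) h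
    nlinarith [Real.rpow_nonneg (mul_nonneg (by positivity : (0:ℝ) ≤ 2/π) h0.le) c,
      (Real.mul_rpow (by positivity : (0:ℝ) ≤ 2/π) h0.le (z := c)).symm ▸
        Real.rpow_nonneg (by positivity : (0:ℝ) ≤ 2/π*θ) c]
  · have hb : 2/π * θ ≤ Real.sin θ := Real.mul_le_sin h0.le h2
    have : Real.sin θ ^ c ≤ (2/π * θ) ^ c :=
      Real.rpow_le_rpow_of_nonpos (by positivity) hb h.le
    rw [Real.mul_rpow (by positivity) h0.le] at this
    linarith

noncomputable def Saux (c : ℝ) : ℝ := ∫ θ in (0:ℝ)..(π/2), Real.sin θ ^ c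
noncomputable def Baux (α : ℝ) (m : ℕ) : ℝ :=
  ∫ θ in (0:ℝ)..(π/2), Real.sin ((2*(m:ℝ)+1)*θ) * Real.sin θ ^ (1-α)



lemma intInt_sin_mul (k : ℕ) {c : ℝ} (hc : -2 < c) :
    IntervalIntegrable (fun θ : ℝ => Real.sin (k*θ) * Real.sin θ ^ c) volume 0 (π/2) := by
  have hpi := Real.pi_pos
  rw [intervalIntegrable_iff_integrableOn_Ioc_of_le (by positivity)]
  have hmeas : AEStronglyMeasurable (fun θ : ℝ => Real.sin (k*θ) * Real.sin θ ^ c)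
      (volume.restrict (Ioc 0 (π/2))) :=
    ((Real.measurable_sin.comp (measurable_const_mul _)).mul
      (Real.measurable_sin.pow_const c)).aestronglyMeasurable
  have hint : IntegrableOn (fun θ : ℝ => (k:ℝ) * Real.sin θ ^ (c+1)) (Ioc 0 (π/2)) volume := by
    have := (intInt_sin_rpow (show (-1:ℝ) < c+1 by linarith)).const_mul (k:ℝ)
    rw [intervalIntegrable_iff_integrableOn_Ioc_of_le (by positivity)] at this
    exact this
  refine hint.mono' hmeas ?_
  filter_upwards [ae_restrict_mem measurableSet_Ioc] with θ hθ
  have hs : 0 < Real.sin θ := Real.sin_pos_of_pos_of_lt_pi hθ.1 (by linarith [hθ.2])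
  rw [Real.norm_eq_abs, abs_mul, abs_of_nonneg (Real.rpow_nonneg hs.le _)]
  calc |Real.sin (↑k*θ)| * Real.sin θ ^ c ≤ (k * |Real.sin θ|) * Real.sin θ ^ c := by
        gcongr
        exact abs_sin_nat_mul_le k θ
    _ = (k:ℝ) * Real.sin θ ^ (c+1) := by
        rw [abs_of_pos hs, Real.rpow_add hs, Real.rpow_one]; ring


lemma Baux_rec {α : ℝ} (hα0 : 0 < α) (hα3 : α < 3) (m : ℕ) :
    (2*(m:ℝ)+4-α) * Baux α (m+1) = (2*(m:ℝ)+α) * Baux α m := by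
  have hpi := Real.pi_pos
  set a : ℝ := 2*(m:ℝ)+3 with ha
  set b : ℝ := 2*(m:ℝ)+1 with hb
  set F : ℝ → ℝ := fun θ => (Real.cos (a*θ) - Real.cos (b*θ)) * Real.sin θ ^ (1-α) with hF
  set f' : ℝ → ℝ := fun θ => -(a+1-α) * (Real.sin (a*θ) * Real.sin θ ^ (1-α))
      + (b-1+α) * (Real.sin (b*θ) * Real.sin θ ^ (1-α)) with hf'
  have hderiv : ∀ θ ∈ Ioo (0:ℝ) (π/2), HasDerivAt F (f' θ) θ := by
    intro θ hθ
    have hs : 0 < Real.sin θ := Real.sin_pos_of_pos_of_lt_pi hθ.1 (by linarith [hθ.2])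
    have h1 : HasDerivAt (fun θ : ℝ => Real.cos (a*θ) - Real.cos (b*θ))
        (-Real.sin (a*θ) * a - (-Real.sin (b*θ) * b)) θ := by
      have := (((hasDerivAt_id θ).const_mul a).cos).sub (((hasDerivAt_id θ).const_mul b).cos)
      exact this.congr_deriv (by simp only [id, mul_one])
    have h2 : HasDerivAt (fun θ : ℝ => Real.sin θ ^ (1-α))
        (Real.cos θ * (1-α) * Real.sin θ ^ (1-α-1)) θ :=
      (Real.hasDerivAt_sin θ).rpow_const (Or.inl hs.ne')
    have h3 := h1.mul h2
    refine h3.congr_deriv (Eq.symm ?_)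
    have hs1 : Real.sin θ ^ (1-α) = Real.sin θ * Real.sin θ ^ (1-α-1) := by
      have h := Real.rpow_add hs 1 (1-α-1)
      rw [show (1:ℝ)+(1-α-1) = 1-α by ring, Real.rpow_one] at h
      exact h
    have htrig : Real.cos (a*θ) * Real.cos θ + Real.sin (a*θ) * Real.sin θ
        = Real.cos (b*θ) * Real.cos θ - Real.sin (b*θ) * Real.sin θ := by
      rw [← Real.cos_sub, ← Real.cos_add]
      congr 1
      rw [ha, hb]; ring
    simp only [hf']
    linear_combination (-(1-α) * (Real.sin (a*θ) + Real.sin (b*θ))) * hs1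
      - ((1-α) * Real.sin θ ^ (1-α-1)) * htrig
  have hc : (-2:ℝ) < 1 - α := by linarith
  have ia : IntervalIntegrable (fun θ : ℝ => Real.sin (a*θ) * Real.sin θ ^ (1-α))
      volume 0 (π/2) := by
    have := intInt_sin_mul (2*m+3) hc
    push_cast at this
    simpa [ha] using this
  have ib : IntervalIntegrable (fun θ : ℝ => Real.sin (b*θ) * Real.sin θ ^ (1-α))
      volume 0 (π/2) := by
    have := intInt_sin_mul (2*m+1) hc
    push_cast at this
    simpa [hb] using this
  have hint : IntervalIntegrable f' volume 0 (π/2) := (ia.const_mul _).add (ib.const_mul _)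
  have htend0 : Tendsto F (nhdsWithin 0 (Ioi 0)) (nhds 0) := by
    have hg : Tendsto (fun θ : ℝ => (2*(2*(m:ℝ)+2)) * Real.sin θ ^ (3-α))
        (nhdsWithin 0 (Ioi 0)) (nhds 0) := by
      have hcont : ContinuousAt (fun θ : ℝ => (2*(2*(m:ℝ)+2)) * Real.sin θ ^ (3-α)) 0 := by
        apply ContinuousAt.mul continuousAt_const
        exact (Real.continuousAt_rpow_const _ _ (Or.inr (by linarith))).comp
          Real.continuous_sin.continuousAt
      have := hcont.tendsto.mono_left (nhdsWithin_le_nhds (s := Ioi (0:ℝ)))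
      simpa [Real.zero_rpow (show (3:ℝ)-α ≠ 0 by linarith)] using this
    refine squeeze_zero_norm' ?_ hg
    filter_upwards [Ioo_mem_nhdsGT (show (0:ℝ) < π/2 by positivity)] with θ hθ
    have hs : 0 < Real.sin θ := Real.sin_pos_of_pos_of_lt_pi hθ.1 (by linarith [hθ.2])
    have hbd : |Real.cos (a*θ) - Real.cos (b*θ)| ≤ (2*(2*(m:ℝ)+2)) * Real.sin θ ^ (2:ℕ) := by
      have he : Real.cos (a*θ) - Real.cos (b*θ)
          = -2 * Real.sin ((2*(m:ℝ)+2)*θ) * Real.sin θ := by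
        rw [Real.cos_sub_cos]
        congr 2 <;> · rw [ha, hb]; ring_nf
      rw [he]
      have h1 := abs_sin_nat_mul_le (2*m+2) θ
      push_cast at h1
      rw [abs_of_pos hs] at h1
      rw [abs_mul, abs_mul, abs_of_pos hs, show |(-2:ℝ)| = 2 by norm_num]
      nlinarith [abs_nonneg (Real.sin ((2*(m:ℝ)+2)*θ)), hs]
    have hFn : ‖F θ‖ = |Real.cos (a*θ) - Real.cos (b*θ)| * Real.sin θ ^ (1-α) := by
      rw [Real.norm_eq_abs, hF, abs_mul, abs_of_nonneg (Real.rpow_nonneg hs.le _)]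
    have hp : Real.sin θ ^ (2:ℕ) * Real.sin θ ^ (1-α) = Real.sin θ ^ (3-α) := by
      rw [← Real.rpow_natCast (Real.sin θ) 2, ← Real.rpow_add hs]
      congr 1
      push_cast
      ring
    rw [hFn]
    calc |Real.cos (a*θ) - Real.cos (b*θ)| * Real.sin θ ^ (1-α)
        ≤ ((2*(2*(m:ℝ)+2)) * Real.sin θ ^ (2:ℕ)) * Real.sin θ ^ (1-α) := by
          exact mul_le_mul_of_nonneg_right hbd (Real.rpow_nonneg hs.le _)
      _ = (2*(2*(m:ℝ)+2)) * (Real.sin θ ^ (2:ℕ) * Real.sin θ ^ (1-α)) := by ring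
      _ = (2*(2*(m:ℝ)+2)) * Real.sin θ ^ (3-α) := by rw [hp]
  have htendb : Tendsto F (nhdsWithin (π/2) (Iio (π/2))) (nhds 0) := by
    have hcont : ContinuousAt F (π/2) := by
      apply ContinuousAt.mul
      · exact ((Real.continuous_cos.comp (continuous_const.mul continuous_id)).continuousAt).sub
          ((Real.continuous_cos.comp (continuous_const.mul continuous_id)).continuousAt)
      · exact (Real.continuousAt_rpow_const _ _ (Or.inl (by
          rw [Real.sin_pi_div_two]; norm_num))).comp Real.continuous_sin.continuousAt
    have hca : Real.cos (a*(π/2)) = 0 := by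
      rw [Real.cos_eq_zero_iff]
      exact ⟨(m:ℤ)+1, by push_cast [ha]; ring⟩
    have hcb : Real.cos (b*(π/2)) = 0 := by
      rw [Real.cos_eq_zero_iff]
      exact ⟨(m:ℤ), by push_cast [hb]; ring⟩
    have hval : F (π/2) = 0 := by
      rw [hF]; simp [hca, hcb]
    have := hcont.tendsto.mono_left (nhdsWithin_le_nhds (s := Iio (π/2)))
    rwa [hval] at this
  have key := integral_eq_sub_of_hasDerivAt_of_tendsto (by positivity) hderiv hint htend0 htendb
  rw [sub_zero] at key
  have e1 : (∫ θ in (0:ℝ)..(π/2), f' θ)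
      = -(a+1-α) * Baux α (m+1) + (b-1+α) * Baux α m := by
    simp only [hf']
    rw [integral_add (ia.const_mul _) (ib.const_mul _), intervalIntegral.integral_const_mul, intervalIntegral.integral_const_mul]
    have h1 : (2*((m+1:ℕ):ℝ)+1) = a := by push_cast [ha]; ring
    have h2 : (2*((m:ℕ):ℝ)+1) = b := by rw [hb]
    rw [Baux, Baux, h1, h2]
  rw [e1] at key
  simp only [ha, hb] at key
  linarith [key]




lemma Saux_rec {α : ℝ} (hα0 : 0 < α) (hα3 : α < 3) :
    (4-α) * Saux (4-α) = (3-α) * Saux (2-α) := by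
  have hpi := Real.pi_pos
  set G : ℝ → ℝ := fun θ => Real.cos θ * Real.sin θ ^ (3-α) with hG
  set g' : ℝ → ℝ := fun θ => (3-α) * Real.sin θ ^ (2-α) - (4-α) * Real.sin θ ^ (4-α) with hg'
  have hderiv : ∀ θ ∈ Ioo (0:ℝ) (π/2), HasDerivAt G (g' θ) θ := by
    intro θ hθ
    have hs : 0 < Real.sin θ := Real.sin_pos_of_pos_of_lt_pi hθ.1 (by linarith [hθ.2])
    have h2 : HasDerivAt (fun θ : ℝ => Real.sin θ ^ (3-α))
        (Real.cos θ * (3-α) * Real.sin θ ^ (3-α-1)) θ :=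
      (Real.hasDerivAt_sin θ).rpow_const (Or.inl hs.ne')
    have h3 := (Real.hasDerivAt_cos θ).mul h2
    refine h3.congr_deriv (Eq.symm ?_)
    have e1 : Real.sin θ * Real.sin θ ^ (3-α-1) = Real.sin θ ^ (3-α) := by
      have h := Real.rpow_add hs 1 (3-α-1)
      rw [show (1:ℝ)+(3-α-1) = 3-α by ring, Real.rpow_one] at h
      exact h.symm
    have e2 : Real.sin θ * Real.sin θ ^ (3-α) = Real.sin θ ^ (4-α) := by
      have h := Real.rpow_add hs 1 (3-α)
      rw [show (1:ℝ)+(3-α) = 4-α by ring, Real.rpow_one] at h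
      exact h.symm
    have e3 : Real.sin θ * Real.sin θ ^ (2-α) = Real.sin θ ^ (3-α) := by
      have h := Real.rpow_add hs 1 (2-α)
      rw [show (1:ℝ)+(2-α) = 3-α by ring, Real.rpow_one] at h
      exact h.symm
    have hcos : Real.cos θ ^ 2 = 1 - Real.sin θ ^ 2 := Real.cos_sq' θ
    have e0 : Real.sin θ ^ (3-α-1) = Real.sin θ ^ (2-α) := by
      congr 1
      ring
    simp only [hg', e0]
    linear_combination (-(3-α)*Real.sin θ^(2-α))*hcos + (4-α)*e2 + (3-α)*Real.sin θ*e3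
  have hint : IntervalIntegrable g' volume 0 (π/2) := by
    exact ((intInt_sin_rpow (by linarith : (-1:ℝ) < 2-α)).const_mul _).sub
      ((intInt_sin_rpow (by linarith : (-1:ℝ) < 4-α)).const_mul _)
  have htend0 : Tendsto G (nhdsWithin 0 (Ioi 0)) (nhds 0) := by
    have hcont : ContinuousAt G 0 := by
      apply ContinuousAt.mul Real.continuous_cos.continuousAt
      exact (Real.continuousAt_rpow_const _ _ (Or.inr (by linarith))).comp
        Real.continuous_sin.continuousAt
    have := hcont.tendsto.mono_left (nhdsWithin_le_nhds (s := Ioi (0:ℝ)))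
    simpa [hG, Real.zero_rpow (show (3:ℝ)-α ≠ 0 by linarith)] using this
  have htendb : Tendsto G (nhdsWithin (π/2) (Iio (π/2))) (nhds 0) := by
    have hcont : ContinuousAt G (π/2) := by
      apply ContinuousAt.mul Real.continuous_cos.continuousAt
      exact (Real.continuousAt_rpow_const _ _ (Or.inl (by
        rw [Real.sin_pi_div_two]; norm_num))).comp Real.continuous_sin.continuousAt
    have hval : G (π/2) = 0 := by simp [hG]
    have := hcont.tendsto.mono_left (nhdsWithin_le_nhds (s := Iio (π/2)))
    rwa [hval] at this
  have key := integral_eq_sub_of_hasDerivAt_of_tendsto (by positivity) hderiv hint htend0 htendb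
  rw [sub_zero] at key
  have e1 : (∫ θ in (0:ℝ)..(π/2), g' θ) = (3-α) * Saux (2-α) - (4-α) * Saux (4-α) := by
    simp only [hg']
    rw [integral_sub ((intInt_sin_rpow (by linarith : (-1:ℝ) < 2-α)).const_mul _)
      ((intInt_sin_rpow (by linarith : (-1:ℝ) < 4-α)).const_mul _),
      intervalIntegral.integral_const_mul, intervalIntegral.integral_const_mul]
    rfl
  rw [e1] at key
  linarith [key]




lemma integral_congr_Ioc {f g : ℝ → ℝ} {a b : ℝ} (hab : a ≤ b)
    (h : ∀ x ∈ Ioc a b, f x = g x) : ∫ x in a..b, f x = ∫ x in a..b, g x := by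
  rw [intervalIntegral.integral_of_le hab, intervalIntegral.integral_of_le hab]
  exact MeasureTheory.setIntegral_congr_fun measurableSet_Ioc h

lemma Baux_one {α : ℝ} (hα0 : 0 < α) (hα3 : α < 3) :
    (4-α) * Baux α 1 = α * Saux (2-α) := by
  have hpi := Real.pi_pos
  have hb : Baux α 1 = 3 * Saux (2-α) - 4 * Saux (4-α) := by
    rw [Baux]
    have hcongr : ∀ θ ∈ Ioc (0:ℝ) (π/2),
        Real.sin ((2*((1:ℕ):ℝ)+1)*θ) * Real.sin θ ^ (1-α)
        = 3 * Real.sin θ ^ (2-α) - 4 * Real.sin θ ^ (4-α) := by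
      intro θ hθ
      have hs : 0 < Real.sin θ := Real.sin_pos_of_pos_of_lt_pi hθ.1 (by linarith [hθ.2])
      have h3 : Real.sin ((2*((1:ℕ):ℝ)+1)*θ) = 3 * Real.sin θ - 4 * Real.sin θ ^ 3 := by
        rw [show (2*((1:ℕ):ℝ)+1)*θ = 3*θ by push_cast; ring]
        exact Real.sin_three_mul θ
      have e1 : Real.sin θ * Real.sin θ ^ (1-α) = Real.sin θ ^ (2-α) := by
        have h := Real.rpow_add hs 1 (1-α)
        rw [show (1:ℝ)+(1-α) = 2-α by ring, Real.rpow_one] at h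
        exact h.symm
      have e2 : Real.sin θ ^ 3 * Real.sin θ ^ (1-α) = Real.sin θ ^ (4-α) := by
        have h := Real.rpow_add hs 3 (1-α)
        rw [show (3:ℝ)+(1-α) = 4-α by ring] at h
        rw [← Real.rpow_natCast (Real.sin θ) 3]
        rw [h]
        norm_num
      rw [h3]
      linear_combination 3*e1 - 4*e2
    rw [integral_congr_Ioc (by positivity) hcongr,
      integral_sub ((intInt_sin_rpow (by linarith : (-1:ℝ) < 2-α)).const_mul _)
        ((intInt_sin_rpow (by linarith : (-1:ℝ) < 4-α)).const_mul _),
      intervalIntegral.integral_const_mul, intervalIntegral.integral_const_mul]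
    rfl
  have hrec := Saux_rec hα0 hα3
  rw [hb]
  linarith [hrec]

lemma Ffun_succ {α : ℝ} (m : ℕ) (hm : 1 ≤ m) :
    Ffun (m+1) α = Ffun m α * (2*(m:ℝ)+α)/(2*(m:ℝ)+(2-α)) := by
  obtain ⟨k, rfl⟩ := Nat.exists_eq_add_of_le hm
  rw [Ffun, Ffun]
  rw [show 1+k+1-1 = (1+k-1)+1 by omega, Finset.prod_Icc_succ_top (by omega)]
  rw [show (1+k-1)+1 = 1+k by omega]
  push_cast
  ring

lemma Baux_val {α : ℝ} (hα0 : 0 < α) (hα3 : α < 3) (m : ℕ) (hm : 1 ≤ m) :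
    (2*(m:ℝ)+2-α) * Baux α m = α * Ffun m α * Saux (2-α) := by
  induction m, hm using Nat.le_induction with
  | base =>
    have h1 : Ffun 1 α = 1 := by simp [Ffun]
    rw [h1]
    push_cast
    rw [show (2*(1:ℝ)+2-α) = 4-α by ring]
    rw [Baux_one hα0 hα3]
    ring
  | succ m hm ih =>
    have hrec := Baux_rec hα0 hα3 m
    have hm' : (1:ℝ) ≤ m := by exact_mod_cast hm
    have hne : (2*(m:ℝ)+2-α) ≠ 0 := by intro h; linarith
    have hF' : Ffun (m+1) α * (2*(m:ℝ)+(2-α)) = Ffun m α * (2*(m:ℝ)+α) := by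
      rw [Ffun_succ m hm]
      rw [div_mul_cancel₀]
      intro h; linarith
    refine mul_left_cancel₀ hne ?_
    push_cast
    linear_combination (2*(m:ℝ)+2-α)*hrec + (2*(m:ℝ)+α)*ih - α*Saux (2-α)*hF'



lemma tele (g : ℕ → ℝ) (n : ℕ) (hn : 1 ≤ n) :
    ∑ m ∈ Finset.Icc 1 (n-1), (g m - g (m+1)) = g 1 - g n := by
  induction n, hn using Nat.le_induction with
  | base => simp
  | succ n hn ih =>
    rw [show n+1-1 = (n-1)+1 by omega, Finset.sum_Icc_succ_top (by omega),
      show (n-1)+1 = n by omega, ih]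
    ring

lemma sum_eq {α : ℝ} (n : ℕ) (hn1 : 1 ≤ n) : ∀ θ ∈ Ioc (0:ℝ) (π/2),
    (Real.cos (2*θ) - Real.cos (2*(n:ℝ)*θ)) * Real.sin θ ^ (-α)
    = ∑ m ∈ Finset.Icc 1 (n-1),
        2 * (Real.sin ((2*(m:ℝ)+1)*θ) * Real.sin θ ^ (1-α)) := by
  have hpi := Real.pi_pos
  intro θ hθ
  have hs : 0 < Real.sin θ := Real.sin_pos_of_pos_of_lt_pi hθ.1 (by linarith [hθ.2])
  have htel := tele (fun m => Real.cos (2*(m:ℝ)*θ)) n hn1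
  have h1 : Real.cos (2*θ) = Real.cos (2*((1:ℕ):ℝ)*θ) := by norm_num
  rw [h1, ← htel, Finset.sum_mul]
  apply Finset.sum_congr rfl
  intro m _
  have hc : Real.cos (2*(m:ℝ)*θ) - Real.cos (2*((m+1:ℕ):ℝ)*θ)
      = 2 * Real.sin ((2*(m:ℝ)+1)*θ) * Real.sin θ := by
    rw [Real.cos_sub_cos]
    push_cast
    rw [show (2*(m:ℝ)*θ + 2*((m:ℝ)+1)*θ)/2 = (2*(m:ℝ)+1)*θ by ring,
      show (2*(m:ℝ)*θ - 2*((m:ℝ)+1)*θ)/2 = -θ by ring, Real.sin_neg]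
    ring
  have e1 : Real.sin θ * Real.sin θ ^ (-α) = Real.sin θ ^ (1-α) := by
    have h := Real.rpow_add hs 1 (-α)
    rw [show (1:ℝ)+(-α) = 1-α by ring, Real.rpow_one] at h
    exact h.symm
  rw [hc]
  linear_combination 2 * Real.sin ((2*(m:ℝ)+1)*θ) * e1

lemma Tint {α : ℝ} (hα3 : α < 3) (n : ℕ) (hn1 : 1 ≤ n) :
    IntervalIntegrable (fun θ : ℝ => (Real.cos (2*θ) - Real.cos (2*(n:ℝ)*θ))
      * Real.sin θ ^ (-α)) volume 0 (π/2) := by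
  have hpi := Real.pi_pos
  have hsum : IntervalIntegrable (fun θ : ℝ => ∑ m ∈ Finset.Icc 1 (n-1),
      2 * (Real.sin ((2*(m:ℝ)+1)*θ) * Real.sin θ ^ (1-α))) volume 0 (π/2) := by
    have hfn : (fun θ : ℝ => ∑ m ∈ Finset.Icc 1 (n-1),
        2 * (Real.sin ((2*(m:ℝ)+1)*θ) * Real.sin θ ^ (1-α)))
        = ∑ m ∈ Finset.Icc 1 (n-1),
          (fun θ : ℝ => 2 * (Real.sin ((2*(m:ℝ)+1)*θ) * Real.sin θ ^ (1-α))) := by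
      funext θ
      rw [Finset.sum_apply]
    rw [hfn]
    refine IntervalIntegrable.sum _ (fun m _ => ?_)
    have hint := (intInt_sin_mul (2*m+1) (show (-2:ℝ) < 1-α by linarith)).const_mul 2
    have hcast : ((2*m+1 : ℕ):ℝ) = 2*(m:ℝ)+1 := by push_cast; ring
    rwa [hcast] at hint
  rw [intervalIntegrable_iff_integrableOn_Ioc_of_le (by positivity)] at hsum ⊢
  exact hsum.congr_fun (fun θ hθ => ((sum_eq n hn1) θ hθ).symm) measurableSet_Ioc

lemma Tsum {α : ℝ} (hα0 : 0 < α) (hα3 : α < 3) (n : ℕ) (hn : 2 ≤ n) :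
    (1-α) * ∫ θ in (0:ℝ)..(π/2),
        (Real.cos (2*θ) - Real.cos (2*(n:ℝ)*θ)) * Real.sin θ ^ (-α)
      = α * (1 - Ffun n α) * Saux (2-α) := by
  have hpi := Real.pi_pos
  have hn1 : 1 ≤ n := by omega
  have hI : (∫ θ in (0:ℝ)..(π/2),
      (Real.cos (2*θ) - Real.cos (2*(n:ℝ)*θ)) * Real.sin θ ^ (-α))
      = ∑ m ∈ Finset.Icc 1 (n-1), 2 * Baux α m := by
    have hcongr := sum_eq (α := α) n hn1
    rw [integral_congr_Ioc (by positivity) hcongr]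
    rw [intervalIntegral.integral_finset_sum]
    · apply Finset.sum_congr rfl
      intro m _
      have hint := (intInt_sin_mul (2*m+1) (show (-2:ℝ) < 1-α by linarith))
      have hcast : ((2*m+1 : ℕ):ℝ) = 2*(m:ℝ)+1 := by push_cast; ring
      rw [hcast] at hint
      rw [intervalIntegral.integral_const_mul]
      rw [Baux]
    · intro m _
      have hint := (intInt_sin_mul (2*m+1) (show (-2:ℝ) < 1-α by linarith)).const_mul 2
      have hcast : ((2*m+1 : ℕ):ℝ) = 2*(m:ℝ)+1 := by push_cast; ring
      rwa [hcast] at hint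
  rw [hI, Finset.mul_sum]
  have hterm : ∀ m ∈ Finset.Icc 1 (n-1),
      (1-α) * (2 * Baux α m) = α * Saux (2-α) * (Ffun m α - Ffun (m+1) α) := by
    intro m hm
    have hm1 : 1 ≤ m := (Finset.mem_Icc.mp hm).1
    have hm' : (1:ℝ) ≤ m := by exact_mod_cast hm1
    have hne : (2*(m:ℝ)+2-α) ≠ 0 := by intro h; linarith
    have hval := Baux_val hα0 hα3 m hm1
    have hF' : Ffun (m+1) α * (2*(m:ℝ)+(2-α)) = Ffun m α * (2*(m:ℝ)+α) := by
      rw [Ffun_succ m hm1, div_mul_cancel₀]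
      intro h; linarith
    refine mul_left_cancel₀ hne ?_
    linear_combination (2-2*α)*hval + α * Saux (2-α) * hF'
  rw [Finset.sum_congr rfl hterm, ← Finset.mul_sum, tele (fun m => Ffun m α) n hn1]
  have hF1 : Ffun 1 α = 1 := by simp [Ffun]
  rw [hF1]
  ring



lemma Sval {α : ℝ} (hα0 : 0 < α) (hα3 : α < 3) :
    Real.sqrt π * Real.Gamma ((3-α)/2) = Real.Gamma (2-α/2) * (2 * Saux (2-α)) := by
  have hpi := Real.pi_pos
  set g : ℝ → ℝ := fun x => x ^ ((1-α)/2) * (1-x) ^ (-(1:ℝ)/2) with hg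
  -- Step A : change of variables x = sin θ ^ 2
  have himage : (fun θ : ℝ => Real.sin θ ^ 2) '' (Ioo 0 (π/2)) = Ioo 0 1 := by
    ext y
    constructor
    · rintro ⟨θ, hθ, rfl⟩
      have hs : 0 < Real.sin θ := Real.sin_pos_of_pos_of_lt_pi hθ.1 (by linarith [hθ.2])
      have hlt : Real.sin θ < 1 := by
        rw [← Real.sin_pi_div_two]
        exact Real.strictMonoOn_sin ⟨by linarith [hθ.1, hθ.2], by linarith [hθ.2]⟩
          ⟨by linarith, le_rfl⟩ hθ.2
      show Real.sin θ ^ 2 ∈ Ioo (0:ℝ) 1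
      exact ⟨by positivity, by nlinarith⟩
    · rintro ⟨hy0, hy1⟩
      have h1 : Real.sqrt y < 1 := by
        rw [show (1:ℝ) = Real.sqrt 1 by simp]
        exact Real.sqrt_lt_sqrt hy0.le hy1
      refine ⟨Real.arcsin (Real.sqrt y), ⟨?_, ?_⟩, ?_⟩
      · exact Real.arcsin_pos.mpr (Real.sqrt_pos.mpr hy0)
      · exact Real.arcsin_lt_pi_div_two.mpr h1
      · show Real.sin (Real.arcsin (Real.sqrt y)) ^ 2 = y
        rw [Real.sin_arcsin (le_trans (by norm_num) (Real.sqrt_nonneg y)) h1.le, Real.sq_sqrt hy0.le]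
  have hderiv : ∀ x ∈ Ioo (0:ℝ) (π/2), HasDerivWithinAt (fun θ : ℝ => Real.sin θ ^ 2)
      (2 * Real.sin x * Real.cos x) (Ioo 0 (π/2)) x := by
    intro x _
    have h := ((Real.hasDerivAt_sin x).pow 2)
    have : ((2:ℕ):ℝ) * Real.sin x ^ (2-1) * Real.cos x = 2 * Real.sin x * Real.cos x := by
      push_cast; ring
    rw [this] at h
    exact h.hasDerivWithinAt
  have hinj : InjOn (fun θ : ℝ => Real.sin θ ^ 2) (Ioo 0 (π/2)) := by
    intro x hx y hy hxy
    have hsx : 0 < Real.sin x := Real.sin_pos_of_pos_of_lt_pi hx.1 (by linarith [hx.2])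
    have hsy : 0 < Real.sin y := Real.sin_pos_of_pos_of_lt_pi hy.1 (by linarith [hy.2])
    have hsin : Real.sin x = Real.sin y := by
      simp only at hxy
      nlinarith
    exact Real.injOn_sin ⟨by linarith [hx.1], by linarith [hx.2]⟩
      ⟨by linarith [hy.1], by linarith [hy.2]⟩ hsin
  have hA : (∫ x in Ioo (0:ℝ) 1, g x) = 2 * Saux (2-α) := by
    rw [← himage, integral_image_eq_integral_abs_deriv_smul measurableSet_Ioo hderiv hinj g]
    have hcongr : ∀ θ ∈ Ioo (0:ℝ) (π/2),
        |2 * Real.sin θ * Real.cos θ| • g (Real.sin θ ^ 2) = 2 * Real.sin θ ^ (2-α) := by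
      intro θ hθ
      have hs : 0 < Real.sin θ := Real.sin_pos_of_pos_of_lt_pi hθ.1 (by linarith [hθ.2])
      have hcθ : 0 < Real.cos θ := Real.cos_pos_of_mem_Ioo ⟨by linarith [hθ.1], hθ.2⟩
      have e1 : (Real.sin θ ^ 2) ^ ((1-α)/2) = Real.sin θ ^ (1-α) := by
        rw [← Real.rpow_natCast (Real.sin θ) 2, ← Real.rpow_mul hs.le]
        congr 1
        push_cast; ring
      have e2 : ((1:ℝ) - Real.sin θ ^ 2) ^ (-(1:ℝ)/2) = (Real.cos θ)⁻¹ := by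
        rw [show (1:ℝ) - Real.sin θ ^ 2 = Real.cos θ ^ 2 from (Real.cos_sq' θ).symm,
          ← Real.rpow_natCast (Real.cos θ) 2, ← Real.rpow_mul hcθ.le]
        rw [show ((2:ℕ):ℝ) * (-(1:ℝ)/2) = -1 by push_cast; ring, Real.rpow_neg_one]
      have e3 : Real.sin θ * Real.sin θ ^ (1-α) = Real.sin θ ^ (2-α) := by
        have h := Real.rpow_add hs 1 (1-α)
        rw [show (1:ℝ)+(1-α) = 2-α by ring, Real.rpow_one] at h
        exact h.symm
      rw [hg]
      simp only [smul_eq_mul]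
      rw [abs_of_pos (by positivity), e1, e2]
      field_simp
      linear_combination e3
    rw [setIntegral_congr_fun measurableSet_Ioo hcongr]
    rw [MeasureTheory.integral_const_mul]
    congr 1
    rw [Saux, intervalIntegral.integral_of_le (by positivity),
      MeasureTheory.integral_Ioc_eq_integral_Ioo]
  -- Step B : the Beta integral equals the real integral
  have hB : Complex.betaIntegral (((3-α)/2 : ℝ) : ℂ) (((1/2 : ℝ)) : ℂ)
      = ((∫ x in Ioo (0:ℝ) 1, g x : ℝ) : ℂ) := by
    rw [Complex.betaIntegral]
    rw [intervalIntegral.integral_of_le (by norm_num : (0:ℝ) ≤ 1),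
      MeasureTheory.integral_Ioc_eq_integral_Ioo]
    have hcongr : ∀ x ∈ Ioo (0:ℝ) 1,
        (x : ℂ) ^ ((((3-α)/2 : ℝ) : ℂ) - 1) * ((1:ℂ) - (x:ℂ)) ^ ((((1/2 : ℝ)) : ℂ) - 1)
        = ((g x : ℝ) : ℂ) := by
      intro x hx
      have h1 : (x : ℂ) ^ ((((3-α)/2 : ℝ) : ℂ) - 1) = ((x ^ ((1-α)/2) : ℝ) : ℂ) := by
        rw [Complex.ofReal_cpow hx.1.le]
        congr 1
        push_cast; ring
      have h2 : ((1:ℂ) - (x:ℂ)) ^ ((((1/2 : ℝ)) : ℂ) - 1) = (((1-x) ^ (-(1:ℝ)/2) : ℝ) : ℂ) := by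
        rw [show (1:ℂ) - (x:ℂ) = (((1-x : ℝ)) : ℂ) by push_cast; ring,
          Complex.ofReal_cpow (by linarith [hx.2] : (0:ℝ) ≤ 1-x)]
        congr 1
        push_cast; ring
      rw [h1, h2, hg]
      push_cast
      ring
    rw [setIntegral_congr_fun measurableSet_Ioo hcongr]
    exact _root_.integral_ofReal
  -- Step C : Gamma identities
  have hu : 0 < Complex.re (((3-α)/2 : ℝ) : ℂ) := by
    rw [Complex.ofReal_re]; linarith
  have hv : 0 < Complex.re (((1/2 : ℝ)) : ℂ) := by
    rw [Complex.ofReal_re]; norm_num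
  have hC := Complex.Gamma_mul_Gamma_eq_betaIntegral hu hv
  rw [hB] at hC
  have hsum : (((3-α)/2 : ℝ) : ℂ) + (((1/2 : ℝ)) : ℂ) = ((2-α/2 : ℝ) : ℂ) := by
    push_cast; ring
  rw [hsum, Complex.Gamma_ofReal, Complex.Gamma_ofReal, Complex.Gamma_ofReal] at hC
  have hC' : Real.Gamma ((3-α)/2) * Real.Gamma (1/2)
      = Real.Gamma (2-α/2) * (∫ x in Ioo (0:ℝ) 1, g x) := by
    exact_mod_cast hC
  rw [Real.Gamma_one_half_eq, hA] at hC'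
  linarith [hC']


theorem stmt5 (n : ℕ) (hn : 2 ≤ n) (α : ℝ) (hα0 : 0 < α) (hα3 : α < 3) (hα1 : α ≠ 1) :
    Jfun n α 1 = Dconst α * (1 - Ffun n α) / (1 - α) := by
  have hpi := Real.pi_pos
  have hn1 : 1 ≤ n := by omega
  have hα1' : (1:ℝ) - α ≠ 0 := fun h => hα1 (by linarith)
  set f : ℝ → ℝ := fun β => (Real.cos β - Real.cos (n*β)) / (2*|Real.sin (β/2)|) ^ α with hf
  have hK : ∀ β : ℝ, Kker 1 β = 2*|Real.sin (β/2)| := by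
    intro β
    have hsq := Real.sin_sq_eq_half_sub (β/2)
    rw [show 2*(β/2) = β by ring] at hsq
    have h : (1:ℝ)^2 - 2*1*Real.cos β + 1 = (2*Real.sin (β/2))^2 := by nlinarith [hsq]
    rw [Kker, h, Real.sqrt_sq_eq_abs, abs_mul]
    norm_num
  have hJ : Jfun n α 1 = (1/α) * ∫ β in (-π)..π, f β := by
    rw [Jfun]
    congr 1
    apply intervalIntegral.integral_congr
    intro β _
    show (Real.cos β - Real.cos (n*β)) / (Kker 1 β) ^ α = f β
    rw [hK β]
  set T : ℝ := ∫ θ in (0:ℝ)..(π/2),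
      (Real.cos (2*θ) - Real.cos (2*(n:ℝ)*θ)) * Real.sin θ ^ (-α) with hT
  have hg_eq : ∀ θ ∈ Ioc (0:ℝ) (π/2), f (2*θ)
      = (2:ℝ)^(-α) * ((Real.cos (2*θ) - Real.cos (2*(n:ℝ)*θ)) * Real.sin θ ^ (-α)) := by
    intro θ hθ
    have hs : 0 < Real.sin θ := Real.sin_pos_of_pos_of_lt_pi hθ.1 (by linarith [hθ.2])
    simp only [hf]
    rw [show (2*θ)/2 = θ by ring, abs_of_pos hs,
      show (n:ℝ)*(2*θ) = 2*(n:ℝ)*θ by ring,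
      Real.mul_rpow (by norm_num : (0:ℝ) ≤ 2) hs.le, div_eq_mul_inv, mul_inv,
      Real.rpow_neg hs.le, Real.rpow_neg (by norm_num : (0:ℝ) ≤ 2)]
    ring
  have hTint := Tint hα3 n hn1
  have hg_int : IntervalIntegrable (fun θ => f (2*θ)) volume 0 (π/2) := by
    have h := hTint.const_mul ((2:ℝ)^(-α))
    rw [intervalIntegrable_iff_integrableOn_Ioc_of_le (by positivity)] at h ⊢
    exact h.congr_fun (fun θ hθ => (hg_eq θ hθ).symm) measurableSet_Ioc
  have hval_half : (∫ θ in (0:ℝ)..(π/2), f (2*θ)) = (2:ℝ)^(-α) * T := by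
    rw [integral_congr_Ioc (by positivity) hg_eq, intervalIntegral.integral_const_mul]
  have hIf0pi : IntervalIntegrable f volume 0 π := by
    have h := hg_int.comp_mul_left (c := 2⁻¹)
    have h2 : (fun x : ℝ => f (2 * (2⁻¹ * x))) = f := by
      funext x
      congr 1
      ring
    rw [show (0:ℝ)/2⁻¹ = 0 by norm_num, show (π/2)/2⁻¹ = π by ring] at h
    exact h2 ▸ h
  have heven : ∀ x : ℝ, f (-x) = f x := by
    intro x
    simp only [hf]
    rw [show (-x)/2 = -(x/2) by ring, Real.sin_neg, abs_neg, Real.cos_neg,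
      show (n:ℝ)*(-x) = -((n:ℝ)*x) by ring, Real.cos_neg]
  have hIfneg : IntervalIntegrable f volume (-π) 0 := by
    have h := hIf0pi.comp_mul_left (c := -1)
    have h2 : (fun x : ℝ => f (-1 * x)) = f := by
      funext x
      rw [show (-1:ℝ)*x = -x by ring, heven]
    rw [h2, show (0:ℝ)/(-1) = 0 by norm_num, show π/(-1) = -π by ring] at h
    exact h.symm
  have hneg : (∫ β in (-π)..(0:ℝ), f β) = ∫ β in (0:ℝ)..π, f β := by
    have h := intervalIntegral.integral_comp_neg (a := 0) (b := π) f
    rw [neg_zero] at h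
    rw [← h]
    apply intervalIntegral.integral_congr
    intro x _
    exact heven x
  have hsplit : (∫ β in (-π)..π, f β) = 2 * ∫ β in (0:ℝ)..π, f β := by
    rw [← intervalIntegral.integral_add_adjacent_intervals hIfneg hIf0pi, hneg]
    ring
  have hhalf : (∫ β in (0:ℝ)..π, f β) = 2 * ∫ θ in (0:ℝ)..(π/2), f (2*θ) := by
    have h := intervalIntegral.integral_comp_mul_left (a := 0) (b := π/2) (c := 2) f
      (by norm_num)
    rw [show (2:ℝ)*0 = 0 by ring, show (2:ℝ)*(π/2) = π by ring, smul_eq_mul] at h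
    rw [h]
    ring
  have hTs := Tsum hα0 hα3 n hn
  have hΓpos : 0 < Real.Gamma (2-α/2) := Real.Gamma_pos_of_pos (by linarith)
  have hsqrtpi : 0 < Real.sqrt π := Real.sqrt_pos.mpr hpi
  have h2α : (0:ℝ) < (2:ℝ)^α := Real.rpow_pos_of_pos (by norm_num) α
  have hSv := Sval hα0 hα3
  have hD : Dconst α = 4 * (2:ℝ)^(-α) * Saux (2-α) := by
    rw [Dconst, Real.rpow_neg (by norm_num : (0:ℝ) ≤ 2), div_eq_iff hΓpos.ne']
    linear_combination (2*((2:ℝ)^α)⁻¹) * hSv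
  rw [← hT] at hTs
  have hαinv : α * α⁻¹ = 1 := mul_inv_cancel₀ hα0.ne'
  rw [hJ, hsplit, hhalf, hval_half, hD, eq_div_iff hα1']
  refine mul_left_cancel₀ hα0.ne' ?_
  linear_combination (4*(2:ℝ)^(-α)*T*(1-α)) * hαinv + 4*(2:ℝ)^(-α) * hTs
end

section
/- Let n ≥ 1 be an integer and let α be a real number with 0 < α < 2. Then the function σ ↦ J_{n,α}(σ) is differentiable at σ = 1, and J_{n,α}′(1) = −(α/2)·J_{n,α}(1). -/
open Real MeasureTheory intervalIntegral Metric Set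
open scoped Interval

private noncomputable def phiK (σ β : ℝ) : ℝ := σ^2 - 2*σ*Real.cos β + 1

private noncomputable def Faux (n : ℕ) (α σ β : ℝ) : ℝ :=
  (Real.cos β - Real.cos (n*β)) * (phiK σ β) ^ (-(α/2))

private noncomputable def F'aux (n : ℕ) (α σ β : ℝ) : ℝ :=
  (Real.cos β - Real.cos (n*β)) * (-(α/2) * ((2*σ - 2*Real.cos β) * (phiK σ β) ^ (-(α/2) - 1)))

private lemma phiK_nonneg (σ β : ℝ) : 0 ≤ phiK σ β := by
  have := Real.sin_sq_add_cos_sq β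
  unfold phiK; nlinarith [sq_nonneg (σ - Real.cos β)]

private lemma sq_le_phiK (σ β : ℝ) : (σ - Real.cos β)^2 ≤ phiK σ β := by
  have := Real.sin_sq_add_cos_sq β
  unfold phiK; nlinarith [sq_nonneg (Real.sin β)]

private lemma phiK_pos (σ β : ℝ) (hβ : Real.sin β ≠ 0) : 0 < phiK σ β := by
  have h1 : (Real.sin β)^2 ≤ phiK σ β := by
    have := Real.sin_sq_add_cos_sq β
    unfold phiK; nlinarith [sq_nonneg (σ - Real.cos β)]
  have : 0 < (Real.sin β)^2 := by positivity
  linarith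

private lemma Faux_eq (n : ℕ) (α σ β : ℝ) :
    (Real.cos β - Real.cos (n*β)) / (Kker σ β) ^ α = Faux n α σ β := by
  have h0 : 0 ≤ σ^2 - 2*σ*Real.cos β + 1 := phiK_nonneg σ β
  unfold Faux phiK Kker
  rw [Real.sqrt_eq_rpow, ← Real.rpow_mul h0, div_eq_mul_inv, ← Real.rpow_neg h0,
    show -(1/2*α) = -(α/2) by ring]

private lemma num_bound (n : ℕ) (β : ℝ) :
    |Real.cos β - Real.cos (n*β)| ≤ (((n:ℝ)^2+1)/2) * β^2 := by
  have h1 : 1 - β^2/2 ≤ Real.cos β := Real.one_sub_sq_div_two_le_cos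
  have h2 : 1 - ((n:ℝ)*β)^2/2 ≤ Real.cos ((n:ℝ)*β) := Real.one_sub_sq_div_two_le_cos
  have h3 := Real.cos_le_one β
  have h4 := Real.cos_le_one ((n:ℝ)*β)
  rw [abs_le]
  constructor <;> nlinarith [sq_nonneg ((n:ℝ)*β), sq_nonneg β]

private lemma phiK_lb {σ β : ℝ} (hβπ : |β| ≤ Real.pi) (hσ : 1/2 < σ) :
    2/Real.pi^2 * β^2 ≤ phiK σ β := by
  have h1 := Real.cos_le_one_sub_mul_cos_sq hβπ
  have h2 := Real.cos_le_one β
  unfold phiK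
  nlinarith [sq_nonneg (σ - 1)]

private lemma Faux_hasDeriv (n : ℕ) (α σ β : ℝ) (hβ : Real.sin β ≠ 0) :
    HasDerivAt (fun σ => Faux n α σ β) (F'aux n α σ β) σ := by
  have h1 : HasDerivAt (fun σ : ℝ => phiK σ β) (2*σ - 2*Real.cos β) σ := by
    unfold phiK
    have := (((hasDerivAt_pow 2 σ).sub
      (((hasDerivAt_id σ).const_mul 2).mul_const (Real.cos β)))).add_const 1
    refine this.congr_deriv ?_
    ring
  have h2 : HasDerivAt (fun x : ℝ => x ^ (-(α/2)))
      (-(α/2) * (phiK σ β) ^ (-(α/2) - 1)) (phiK σ β) :=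
    Real.hasDerivAt_rpow_const (Or.inl (phiK_pos σ β hβ).ne')
  have h3 := (h2.comp σ h1).const_mul (Real.cos β - Real.cos (n*β))
  refine h3.congr_deriv ?_
  unfold F'aux
  ring

private lemma F'aux_one (n : ℕ) (α β : ℝ) (hα : 0 < α) :
    F'aux n α 1 β = -(α/2) * Faux n α 1 β := by
  have hφ : phiK 1 β = 2 - 2*Real.cos β := by unfold phiK; ring
  unfold F'aux Faux
  rcases eq_or_lt_of_le (phiK_nonneg 1 β) with h | h
  · rw [← h, Real.zero_rpow (ne_of_lt (by linarith : -(α/2) - 1 < 0)),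
      Real.zero_rpow (ne_of_lt (by linarith : -(α/2) < 0))]
    ring
  · have key : (2*1 - 2*Real.cos β) * (phiK 1 β) ^ (-(α/2) - 1) = (phiK 1 β) ^ (-(α/2)) := by
      have h2 : (2*1 - 2*Real.cos β) = phiK 1 β := by rw [hφ]; ring
      rw [h2]
      nth_rewrite 1 [show phiK 1 β = (phiK 1 β) ^ (1:ℝ) from (Real.rpow_one _).symm]
      rw [← Real.rpow_add h]
      norm_num
    rw [key]; ring

private lemma F'aux_bound (n : ℕ) (α : ℝ) (hα0 : 0 < α) {σ β : ℝ} (hβ0 : β ≠ 0)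
    (hβπ : |β| ≤ Real.pi) (hσl : 1/2 < σ) :
    |F'aux n α σ β| ≤ (((n:ℝ)^2+1)/2) * α * ((2/Real.pi^2) ^ (-((α+1)/2))) * |β| ^ (1-α) := by
  have hπ := Real.pi_pos
  have hc : 0 < 2/Real.pi^2 * β^2 := by positivity
  have hφlb := phiK_lb hβπ hσl
  have hφpos : 0 < phiK σ β := lt_of_lt_of_le hc hφlb
  have habs : |2*σ - 2*Real.cos β| ≤ 2 * (phiK σ β) ^ ((1:ℝ)/2) := by
    have h2 : |σ - Real.cos β| ≤ Real.sqrt (phiK σ β) := by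
      rw [← Real.sqrt_sq_eq_abs]; exact Real.sqrt_le_sqrt (sq_le_phiK σ β)
    rw [Real.sqrt_eq_rpow] at h2
    calc |2*σ - 2*Real.cos β| = 2 * |σ - Real.cos β| := by
          rw [show 2*σ - 2*Real.cos β = 2*(σ - Real.cos β) by ring, abs_mul, abs_two]
      _ ≤ 2 * (phiK σ β) ^ ((1:ℝ)/2) := by linarith
  have hrp1 : (0:ℝ) ≤ (phiK σ β) ^ (-(α/2) - 1) := Real.rpow_nonneg (phiK_nonneg σ β) _
  have e1 : (phiK σ β) ^ ((1:ℝ)/2) * (phiK σ β) ^ (-(α/2) - 1)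
      = (phiK σ β) ^ (-((α+1)/2)) := by
    rw [← Real.rpow_add hφpos]; congr 1; ring
  have step3 : (phiK σ β) ^ (-((α+1)/2)) ≤ (2/Real.pi^2 * β^2) ^ (-((α+1)/2)) :=
    Real.rpow_le_rpow_of_nonpos hc hφlb (by linarith)
  have step4 : (2/Real.pi^2 * β^2) ^ (-((α+1)/2))
      = (2/Real.pi^2) ^ (-((α+1)/2)) * |β| ^ (-(α+1)) := by
    rw [Real.mul_rpow (by positivity) (sq_nonneg β)]
    congr 1
    rw [← sq_abs β, ← Real.rpow_natCast |β| 2, ← Real.rpow_mul (abs_nonneg β)]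
    congr 1
    all_goals push_cast
    all_goals ring
  have step5 : β^2 * |β| ^ (-(α+1)) = |β| ^ (1-α) := by
    rw [← sq_abs β, ← Real.rpow_natCast |β| 2, ← Real.rpow_add (abs_pos.mpr hβ0)]
    congr 1
    all_goals push_cast
    all_goals ring
  calc |F'aux n α σ β|
      ≤ ((((n:ℝ)^2+1)/2) * β^2) * ((α/2) * (2 * (phiK σ β) ^ ((1:ℝ)/2)
        * (phiK σ β) ^ (-(α/2) - 1))) := by
        unfold F'aux
        rw [abs_mul, abs_mul, abs_mul, abs_neg, abs_of_pos (by positivity : (0:ℝ) < α/2),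
          abs_of_nonneg hrp1]
        have hnum := num_bound n β
        gcongr <;> first | exact hnum | exact habs | positivity
    _ = ((((n:ℝ)^2+1)/2) * α * β^2) * ((phiK σ β) ^ ((1:ℝ)/2) * (phiK σ β) ^ (-(α/2) - 1)) := by
        ring
    _ = ((((n:ℝ)^2+1)/2) * α * β^2) * (phiK σ β) ^ (-((α+1)/2)) := by rw [e1]
    _ ≤ ((((n:ℝ)^2+1)/2) * α * β^2) * (2/Real.pi^2 * β^2) ^ (-((α+1)/2)) := by
        apply mul_le_mul_of_nonneg_left step3 (by positivity)
    _ = ((((n:ℝ)^2+1)/2) * α * ((2/Real.pi^2) ^ (-((α+1)/2)))) * (β^2 * |β| ^ (-(α+1))) := by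
        rw [step4]; ring
    _ = (((n:ℝ)^2+1)/2) * α * ((2/Real.pi^2) ^ (-((α+1)/2))) * |β| ^ (1-α) := by rw [step5]

private lemma Faux_one_bound (n : ℕ) (α : ℝ) (hα0 : 0 < α) (hα2 : α < 2) {β : ℝ}
    (hβ0 : β ≠ 0) (hβπ : |β| ≤ Real.pi) :
    |Faux n α 1 β| ≤ (((n:ℝ)^2+1)/2) * ((2/Real.pi^2) ^ (-(α/2))) * Real.pi ^ (2-α) := by
  have hπ := Real.pi_pos
  have hc : 0 < 2/Real.pi^2 * β^2 := by positivity
  have hφlb := phiK_lb hβπ (by norm_num : (1:ℝ)/2 < 1)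
  have hφpos : 0 < phiK 1 β := lt_of_lt_of_le hc hφlb
  have step3 : (phiK 1 β) ^ (-(α/2)) ≤ (2/Real.pi^2 * β^2) ^ (-(α/2)) :=
    Real.rpow_le_rpow_of_nonpos hc hφlb (by linarith)
  have step4 : (2/Real.pi^2 * β^2) ^ (-(α/2))
      = (2/Real.pi^2) ^ (-(α/2)) * |β| ^ (-α) := by
    rw [Real.mul_rpow (by positivity) (sq_nonneg β)]
    congr 1
    rw [← sq_abs β, ← Real.rpow_natCast |β| 2, ← Real.rpow_mul (abs_nonneg β)]
    congr 1
    all_goals push_cast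
    all_goals ring
  have step5 : β^2 * |β| ^ (-α) = |β| ^ (2-α) := by
    rw [← sq_abs β, ← Real.rpow_natCast |β| 2, ← Real.rpow_add (abs_pos.mpr hβ0)]
    congr 1
    all_goals push_cast
    all_goals ring
  have step6 : |β| ^ (2-α) ≤ Real.pi ^ (2-α) :=
    Real.rpow_le_rpow (abs_nonneg β) hβπ (by linarith)
  calc |Faux n α 1 β|
      ≤ ((((n:ℝ)^2+1)/2) * β^2) * (phiK 1 β) ^ (-(α/2)) := by
        unfold Faux
        rw [abs_mul, abs_of_nonneg (Real.rpow_nonneg (phiK_nonneg 1 β) _)]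
        exact mul_le_mul_of_nonneg_right (num_bound n β)
          (Real.rpow_nonneg (phiK_nonneg 1 β) _)
    _ ≤ ((((n:ℝ)^2+1)/2) * β^2) * (2/Real.pi^2 * β^2) ^ (-(α/2)) := by
        apply mul_le_mul_of_nonneg_left step3 (by positivity)
    _ = ((((n:ℝ)^2+1)/2) * ((2/Real.pi^2) ^ (-(α/2)))) * (β^2 * |β| ^ (-α)) := by
        rw [step4]; ring
    _ = ((((n:ℝ)^2+1)/2) * ((2/Real.pi^2) ^ (-(α/2)))) * |β| ^ (2-α) := by rw [step5]
    _ ≤ (((n:ℝ)^2+1)/2) * ((2/Real.pi^2) ^ (-(α/2))) * Real.pi ^ (2-α) := by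
        apply mul_le_mul_of_nonneg_left step6 (by positivity)

theorem stmt6 (n : ℕ) (hn : 1 ≤ n) (α : ℝ) (hα0 : 0 < α) (hα2 : α < 2) :
    HasDerivAt (Jfun n α) (-(α/2) * Jfun n α 1) 1 := by
  have hπ := Real.pi_pos
  have hle : -Real.pi ≤ Real.pi := by linarith
  set C1 : ℝ := (((n:ℝ)^2+1)/2) * α * ((2/Real.pi^2) ^ (-((α+1)/2))) with hC1
  have hae : ∀ᵐ β : ℝ, Real.sin β ≠ 0 := by
    have hcount : Set.Countable {β : ℝ | Real.sin β = 0} := by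
      have hsub : {β : ℝ | Real.sin β = 0} ⊆ Set.range (fun k : ℤ => (k:ℝ) * Real.pi) := by
        intro β hβ
        rcases Real.sin_eq_zero_iff.mp hβ with ⟨k, hk⟩
        exact ⟨k, hk⟩
      exact (Set.countable_range _).mono hsub
    have h0 : volume {β : ℝ | Real.sin β = 0} = 0 := hcount.measure_zero _
    rw [MeasureTheory.ae_iff]
    simpa using h0
  have hmeasF : ∀ σ : ℝ, AEStronglyMeasurable (fun β => Faux n α σ β)
      (volume.restrict (Ι (-Real.pi) Real.pi)) := by
    intro σ
    apply Measurable.aestronglyMeasurable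
    unfold Faux phiK
    fun_prop
  have hmeasF' : AEStronglyMeasurable (fun β => F'aux n α 1 β)
      (volume.restrict (Ι (-Real.pi) Real.pi)) := by
    apply Measurable.aestronglyMeasurable
    unfold F'aux phiK
    fun_prop
  have hmem : ∀ β ∈ Ι (-Real.pi) Real.pi, |β| ≤ Real.pi := by
    intro β hβ
    rw [Set.uIoc_of_le hle] at hβ
    rw [abs_le]; exact ⟨hβ.1.le, hβ.2⟩
  have hF_int : IntervalIntegrable (fun β => Faux n α 1 β) volume (-Real.pi) Real.pi := by
    rw [intervalIntegrable_iff]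
    apply MeasureTheory.Integrable.mono'
      ((integrableOn_const_iff (C := (((n:ℝ)^2+1)/2) * ((2/Real.pi^2) ^ (-(α/2))) * Real.pi ^ (2-α))
        (by finiteness)).mpr (Or.inr (by rw [Set.uIoc_of_le hle]; exact measure_Ioc_lt_top)))
      (hmeasF 1)
    filter_upwards [MeasureTheory.ae_restrict_mem measurableSet_uIoc,
      MeasureTheory.ae_restrict_of_ae hae] with β hβ hsin
    have hβ0 : β ≠ 0 := fun h => hsin (h ▸ Real.sin_zero)
    simpa [Real.norm_eq_abs] using Faux_one_bound n α hα0 hα2 hβ0 (hmem β hβ)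
  have habs_int : IntervalIntegrable (fun x : ℝ => |x| ^ (1-α)) volume (-Real.pi) Real.pi := by
    have h1 : IntervalIntegrable (fun x : ℝ => x ^ (1-α)) volume 0 Real.pi :=
      intervalIntegrable_rpow' (by linarith)
    have h2 : IntervalIntegrable (fun x : ℝ => |x| ^ (1-α)) volume 0 Real.pi := by
      apply h1.congr_ae
      filter_upwards [MeasureTheory.ae_restrict_mem measurableSet_uIoc] with x hx
      rw [Set.uIoc_of_le hπ.le] at hx
      rw [abs_of_pos hx.1]
    have h3 := ((IntervalIntegrable.iff_comp_neg (f := fun x : ℝ => |x| ^ (1-α))).mp h2).symm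
    simp only [abs_neg, neg_zero] at h3
    exact h3.trans h2
  have hbound_int : IntervalIntegrable (fun β => C1 * |β| ^ (1-α)) volume
      (-Real.pi) Real.pi := habs_int.const_mul C1
  have h_bound : ∀ᵐ β : ℝ, β ∈ Ι (-Real.pi) Real.pi →
      ∀ σ ∈ Metric.ball (1:ℝ) (1/2), ‖F'aux n α σ β‖ ≤ C1 * |β| ^ (1-α) := by
    filter_upwards [hae] with β hsin hβmem σ hσ
    have hβ0 : β ≠ 0 := fun h => hsin (h ▸ Real.sin_zero)
    have hσl : 1/2 < σ := by
      rw [Metric.mem_ball, Real.dist_eq, abs_lt] at hσ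
      linarith [hσ.1]
    simpa [Real.norm_eq_abs, hC1, mul_assoc] using
      F'aux_bound n α hα0 hβ0 (hmem β hβmem) hσl
  have h_diff : ∀ᵐ β : ℝ, β ∈ Ι (-Real.pi) Real.pi →
      ∀ σ ∈ Metric.ball (1:ℝ) (1/2), HasDerivAt (fun σ => Faux n α σ β) (F'aux n α σ β) σ := by
    filter_upwards [hae] with β hsin _ σ _
    exact Faux_hasDeriv n α σ β hsin
  obtain ⟨-, hderiv⟩ := intervalIntegral.hasDerivAt_integral_of_dominated_loc_of_deriv_le
    (F := fun σ β => Faux n α σ β) (F' := fun σ β => F'aux n α σ β)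
    (bound := fun β => C1 * |β| ^ (1-α)) (Metric.ball_mem_nhds (1:ℝ) (by norm_num : (0:ℝ) < 1/2))
    (Filter.Eventually.of_forall hmeasF) hF_int hmeasF' h_bound hbound_int h_diff
  have hJ : Jfun n α = fun σ => (1/α) * ∫ β in (-Real.pi)..Real.pi, Faux n α σ β := by
    funext σ
    unfold Jfun
    congr 1
    exact intervalIntegral.integral_congr fun β _ => Faux_eq n α σ β
  rw [hJ]
  have hfinal := hderiv.const_mul (1/α)
  refine hfinal.congr_deriv (Eq.symm ?_)
  beta_reduce
  have heq : (∫ β in (-Real.pi)..Real.pi, F'aux n α 1 β)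
      = ∫ β in (-Real.pi)..Real.pi, -(α/2) * Faux n α 1 β :=
    intervalIntegral.integral_congr fun β _ => F'aux_one n α β hα0
  rw [heq, intervalIntegral.integral_const_mul]
  ring
end

section
/- Let n ≥ 1 be an integer, let α > 0 be a real number, and let σ > 0 with σ ≠ 1. Then ∫_{−π}^{π} sin β · sin(nβ)/|σ − e^{iβ}|^{2+α} dβ = (n/(α·σ)) · ∫_{−π}^{π} cos(nβ)/|σ − e^{iβ}|^α dβ. -/
theorem stmt10 (n : ℕ) (hn : 1 ≤ n) (α : ℝ) (hα : 0 < α)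
    (σ : ℝ) (hσ : 0 < σ) (hσ1 : σ ≠ 1) :
    (∫ β in (-Real.pi)..Real.pi,
        Real.sin β * Real.sin ((n:ℝ)*β) / (Kker σ β) ^ (2+α))
      = ((n:ℝ)/(α*σ)) *
        ∫ β in (-Real.pi)..Real.pi, Real.cos ((n:ℝ)*β) / (Kker σ β) ^ α := by
  have hqpos : ∀ β : ℝ, 0 < σ^2 - 2*σ*Real.cos β + 1 := by
    intro β
    have h1 := Real.cos_le_one β
    have h2 : (σ-1)^2 > 0 := by
      have : σ - 1 ≠ 0 := sub_ne_zero.mpr hσ1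
      positivity
    nlinarith
  have hqc : Continuous (fun β : ℝ => σ^2 - 2*σ*Real.cos β + 1) := by fun_prop
  -- Kker to rpow of q
  have hK : ∀ (β : ℝ) (r : ℝ), (Kker σ β) ^ r = (σ^2 - 2*σ*Real.cos β + 1) ^ (r/2) := by
    intro β r
    rw [Kker, Real.sqrt_eq_rpow, ← Real.rpow_mul (hqpos β).le]
    congr 1; ring
  have hqd : ∀ β : ℝ, HasDerivAt (fun β : ℝ => σ^2 - 2*σ*Real.cos β + 1)
      (2*σ*Real.sin β) β := by
    intro β
    have h := (((hasDerivAt_const β (σ^2)).sub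
      ((Real.hasDerivAt_cos β).const_mul (2*σ))).add (hasDerivAt_const β 1))
    exact h.congr_deriv (by ring)
  have hvd : ∀ β : ℝ, HasDerivAt (fun β : ℝ => (σ^2 - 2*σ*Real.cos β + 1) ^ (-(α/2)))
      (-(α*σ) * Real.sin β * (σ^2 - 2*σ*Real.cos β + 1) ^ (-(α/2)-1)) β := by
    intro β
    have h := (hqd β).rpow_const (p := -(α/2)) (Or.inl (hqpos β).ne')
    convert h using 1; ring
  have hud : ∀ β : ℝ, HasDerivAt (fun β : ℝ => Real.sin ((n:ℝ)*β))
      ((n:ℝ) * Real.cos ((n:ℝ)*β)) β := by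
    intro β
    have h := (Real.hasDerivAt_sin ((n:ℝ)*β)).comp β ((hasDerivAt_id β).const_mul (n:ℝ))
    exact h.congr_deriv (by ring)
  have hu'int : IntervalIntegrable (fun β : ℝ => (n:ℝ) * Real.cos ((n:ℝ)*β))
      MeasureTheory.volume (-Real.pi) Real.pi := by
    apply Continuous.intervalIntegrable; fun_prop
  have hv'int : IntervalIntegrable
      (fun β : ℝ => -(α*σ) * Real.sin β * (σ^2 - 2*σ*Real.cos β + 1) ^ (-(α/2)-1))
      MeasureTheory.volume (-Real.pi) Real.pi := by
    apply Continuous.intervalIntegrable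
    apply Continuous.mul (by fun_prop)
    exact hqc.rpow_const (fun β => Or.inl (hqpos β).ne')
  have hασ : α * σ ≠ 0 := by positivity
  have hα0 : α ≠ 0 := hα.ne'
  have hσ0 : σ ≠ 0 := hσ.ne'
  have ibp := intervalIntegral.integral_mul_deriv_eq_deriv_mul
    (u := fun β : ℝ => Real.sin ((n:ℝ)*β))
    (v := fun β : ℝ => (σ^2 - 2*σ*Real.cos β + 1) ^ (-(α/2)))
    (fun x _ => hud x) (fun x _ => hvd x) hu'int hv'int
  have hbdry1 : Real.sin ((n:ℝ)*Real.pi) = 0 := Real.sin_nat_mul_pi n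
  have hbdry2 : Real.sin ((n:ℝ)*(-Real.pi)) = 0 := by
    rw [mul_neg, Real.sin_neg, hbdry1, neg_zero]
  have key1 : (∫ β in (-Real.pi)..Real.pi,
      Real.sin β * Real.sin ((n:ℝ)*β) / (Kker σ β) ^ (2+α))
      = (-(α*σ))⁻¹ * ∫ β in (-Real.pi)..Real.pi,
        Real.sin ((n:ℝ)*β) *
          (-(α*σ) * Real.sin β * (σ^2 - 2*σ*Real.cos β + 1) ^ (-(α/2)-1)) := by
    rw [← intervalIntegral.integral_const_mul]
    apply intervalIntegral.integral_congr
    intro β _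
    dsimp only
    rw [hK, show -(α/2)-1 = -((2+α)/2) by ring, Real.rpow_neg (hqpos β).le, div_eq_mul_inv]
    have hc : (-(α*σ))⁻¹ * -(α*σ) = 1 := inv_mul_cancel₀ (neg_ne_zero.mpr hασ)
    linear_combination (-(Real.sin β * Real.sin ((n:ℝ)*β) *
      ((σ^2 - 2*σ*Real.cos β + 1) ^ ((2+α)/2))⁻¹)) * hc
  have key2 : (∫ β in (-Real.pi)..Real.pi,
      (n:ℝ) * Real.cos ((n:ℝ)*β) * (σ^2 - 2*σ*Real.cos β + 1) ^ (-(α/2)))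
      = (n:ℝ) * ∫ β in (-Real.pi)..Real.pi, Real.cos ((n:ℝ)*β) / (Kker σ β) ^ α := by
    rw [← intervalIntegral.integral_const_mul]
    apply intervalIntegral.integral_congr
    intro β _
    dsimp only
    rw [hK, Real.rpow_neg (hqpos β).le]
    ring
  rw [key1, ibp]
  rw [hbdry1, hbdry2]
  simp only [zero_mul, sub_zero, zero_sub]
  rw [key2]
  field_simp
end

section
/- For every integer n ≥ 0 and every real number α, ∑_{j=0}^{n} C(n,j)·(−1)^j·∏_{k=1}^{j} (2k−1−α)/(2k−1) = (∏_{k=0}^{n−1} 1/(2k+1)) · ∏_{m=0}^{n−1} (2m+α), where C(n,j) denotes the binomial coefficient and empty products equal 1. -/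
open Finset

private noncomputable def Pf (α : ℝ) (m j : ℕ) : ℝ :=
  ∏ k ∈ range j, (((1-α)/2 + m + k) / ((1:ℝ)/2 + m + k))

private noncomputable def Sf (α : ℝ) (n m : ℕ) : ℝ :=
  ∑ j ∈ range (n+1), (n.choose j : ℝ) * (-1)^j * Pf α m j

private lemma Pshift (α : ℝ) (m j : ℕ) :
    Pf α m (j+1) = ((1-α)/2 + m) / ((1:ℝ)/2 + m) * Pf α (m+1) j := by
  unfold Pf
  rw [Finset.prod_range_succ']
  rw [mul_comm]
  congr 1
  · push_cast; norm_num
  · exact Finset.prod_congr rfl fun k _ => by push_cast; ring_nf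

private lemma Srec (α : ℝ) (n m : ℕ) :
    Sf α (n+1) m = Sf α n m - ((1-α)/2 + m) / ((1:ℝ)/2 + m) * Sf α n (m+1) := by
  unfold Sf
  rw [Finset.sum_range_succ' (fun j => (((n+1).choose j : ℝ)) * (-1)^j * Pf α m j) (n+1)]
  have hsplit : ∀ j ∈ range (n+1), (((n+1).choose (j+1) : ℝ)) * (-1)^(j+1) * Pf α m (j+1)
      = (n.choose (j+1) : ℝ) * (-1)^(j+1) * Pf α m (j+1)
        + -( ((1-α)/2 + m) / ((1:ℝ)/2 + m) ) * ((n.choose j : ℝ) * (-1)^j * Pf α (m+1) j) := by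
    intro j _
    rw [Nat.choose_succ_succ, Pshift]
    push_cast
    ring
  rw [Finset.sum_congr rfl hsplit, Finset.sum_add_distrib, ← Finset.mul_sum]
  have h1 : (∑ j ∈ range (n+1), (n.choose (j+1) : ℝ) * (-1)^(j+1) * Pf α m (j+1))
      = ∑ j ∈ range n, (n.choose (j+1) : ℝ) * (-1)^(j+1) * Pf α m (j+1) := by
    rw [Finset.sum_range_succ]
    simp [Nat.choose_succ_self]
  have h2 : (∑ j ∈ range (n+1), (n.choose j : ℝ) * (-1)^j * Pf α m j)
      = (∑ j ∈ range n, (n.choose (j+1) : ℝ) * (-1)^(j+1) * Pf α m (j+1))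
        + (n.choose 0 : ℝ) * (-1)^0 * Pf α m 0 := by
    rw [Finset.sum_range_succ' (fun j => (n.choose j : ℝ) * (-1)^j * Pf α m j) n]
  have hP0 : Pf α m 0 = 1 := Finset.prod_range_zero _
  rw [h1, h2, hP0]
  simp only [Nat.choose_zero_right, Nat.cast_one]
  ring

private lemma key_s16 (α : ℝ) : ∀ n m : ℕ,
    Sf α n m = ∏ k ∈ range n, ((α/2 + k) / ((1:ℝ)/2 + m + k)) := by
  intro n
  induction n with
  | zero => intro m; simp [Sf, Pf]
  | succ n ih =>
    intro m
    rw [Srec, ih m, ih (m+1)]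
    have hD : (∏ k ∈ range n, ((1:ℝ)/2 + m + k)) ≠ 0 := by
      apply Finset.prod_ne_zero_iff.mpr; intro k _; positivity
    have hDn : ((1:ℝ)/2 + m + n) ≠ 0 := by positivity
    have hcm : ((1:ℝ)/2 + m) ≠ 0 := by positivity
    have hE : (∏ k ∈ range n, ((1:ℝ)/2 + ((m+1 : ℕ) : ℝ) + k))
        = (∏ k ∈ range n, ((1:ℝ)/2 + m + k)) * ((1:ℝ)/2 + m + n) / ((1:ℝ)/2 + m) := by
      have e1 : (∏ k ∈ range (n+1), ((1:ℝ)/2 + m + k))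
          = (∏ k ∈ range n, ((1:ℝ)/2 + m + ((k+1 : ℕ) : ℝ))) * ((1:ℝ)/2 + m + ((0:ℕ):ℝ)) :=
        Finset.prod_range_succ' (fun k => (1:ℝ)/2 + m + k) n
      have e2 : (∏ k ∈ range (n+1), ((1:ℝ)/2 + m + k))
          = (∏ k ∈ range n, ((1:ℝ)/2 + m + k)) * ((1:ℝ)/2 + m + n) :=
        Finset.prod_range_succ _ n
      have e3 : (∏ k ∈ range n, ((1:ℝ)/2 + ((m+1 : ℕ) : ℝ) + k))
          = ∏ k ∈ range n, ((1:ℝ)/2 + m + ((k+1 : ℕ) : ℝ)) := by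
        apply Finset.prod_congr rfl; intro k _; push_cast; ring
      have e4 : (∏ k ∈ range n, ((1:ℝ)/2 + m + ((k+1 : ℕ) : ℝ))) * ((1:ℝ)/2 + m)
          = (∏ k ∈ range n, ((1:ℝ)/2 + m + k)) * ((1:ℝ)/2 + m + n) := by
        have := e1.symm.trans e2
        push_cast at this
        linarith [this]
      rw [e3, eq_div_iff hcm, e4]
    rw [Finset.prod_div_distrib, Finset.prod_div_distrib, Finset.prod_div_distrib, hE,
      Finset.prod_range_succ (fun k => α/2 + (k:ℝ)) n,
      Finset.prod_range_succ (fun k => (1:ℝ)/2 + m + k) n]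
    field_simp
    ring

theorem stmt16 (n : ℕ) (α : ℝ) :
    ∑ j ∈ Finset.range (n+1), (n.choose j : ℝ) * (-1)^j *
        ∏ k ∈ Finset.Icc 1 j, (2*(k:ℝ) - 1 - α) / (2*(k:ℝ) - 1)
      = (∏ k ∈ Finset.range n, 1/(2*(k:ℝ)+1)) *
          ∏ m ∈ Finset.range n, (2*(m:ℝ)+α) := by
  have h := key_s16 α n 0
  unfold Sf Pf at h
  have hL : ∀ j ∈ range (n+1), (∏ k ∈ Finset.Icc 1 j, (2*(k:ℝ) - 1 - α) / (2*(k:ℝ) - 1))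
      = ∏ k ∈ range j, (((1-α)/2 + ((0:ℕ):ℝ) + k) / ((1:ℝ)/2 + ((0:ℕ):ℝ) + k)) := by
    intro j _
    rw [show Finset.Icc 1 j = Finset.Ico 1 (j+1) from rfl]
    rw [Finset.prod_Ico_eq_prod_range]
    apply Finset.prod_congr (by simp) ?_
    intro k _
    have hk0 : (0:ℝ) ≤ (k:ℝ) := Nat.cast_nonneg k
    rw [div_eq_div_iff (by push_cast; linarith) (by push_cast; linarith)]
    push_cast
    ring
  have h2 : (∑ j ∈ Finset.range (n+1), (n.choose j : ℝ) * (-1)^j *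
        ∏ k ∈ Finset.Icc 1 j, (2*(k:ℝ) - 1 - α) / (2*(k:ℝ) - 1))
      = ∑ j ∈ range (n+1), (n.choose j : ℝ) * (-1)^j *
        ∏ k ∈ range j, (((1-α)/2 + ((0:ℕ):ℝ) + k) / ((1:ℝ)/2 + ((0:ℕ):ℝ) + k)) :=
    Finset.sum_congr rfl fun j hj => by rw [hL j hj]
  rw [h2, h, ← Finset.prod_mul_distrib]
  apply Finset.prod_congr rfl
  intro k _
  have hk1 : (2*(k:ℝ)+1) ≠ 0 := by positivity
  have hk2 : ((1:ℝ)/2 + ((0:ℕ):ℝ) + k) ≠ 0 := by push_cast; positivity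
  field_simp
  ring
end

section
/- Let n ≥ 1 be an integer and let α be a real number with 0 < α < 1. Then ∫_{0}^{π/2} cos(2nβ)/(sin β)^α dβ = (1/2) ∑_{j=0}^{n} C(2n, 2j)·(−1)^j · B(j + (1−α)/2, n − j + 1/2), where B denotes the Beta function. -/
open MeasureTheory Real Set Finset intervalIntegral

/-- The Beta function `B(x,y) = ∫_0^1 t^{x-1}(1-t)^{y-1} dt`. -/
noncomputable def Beta (x y : ℝ) : ℝ :=
  ∫ t in (0:ℝ)..1, t ^ (x-1) * (1-t) ^ (y-1)

lemma aux_betaIntegrable {p q : ℝ} (hp : -1 < p) (hq : -1 < q) :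
    IntervalIntegrable (fun t : ℝ => t ^ p * (1-t) ^ q) volume 0 1 := by
  have h1 : IntervalIntegrable (fun t : ℝ => t ^ p * (1-t) ^ q) volume 0 (1/2) := by
    rw [intervalIntegrable_iff_integrableOn_Icc_of_le (by norm_num)]
    have hInt : IntegrableOn (fun t : ℝ => t ^ p) (Icc (0:ℝ) (1/2)) volume := by
      rw [integrableOn_Icc_iff_integrableOn_Ioc,
        ← intervalIntegrable_iff_integrableOn_Ioc_of_le (by norm_num)]
      exact intervalIntegral.intervalIntegrable_rpow' hp
    have hCont : ContinuousOn (fun t : ℝ => (1-t) ^ q) (Icc (0:ℝ) (1/2)) := by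
      intro t ht
      exact ((Real.continuousAt_rpow_const (1-t) q (Or.inl (by simp at ht; nlinarith))).comp
        ((continuous_const.sub continuous_id).continuousAt)).continuousWithinAt
    have := MeasureTheory.IntegrableOn.continuousOn_mul (g := fun t : ℝ => (1-t)^q)
      (g' := fun t : ℝ => t ^ p) hCont hInt isCompact_Icc
    exact this.congr_fun (fun t _ => mul_comm _ _) measurableSet_Icc
  have h2 : IntervalIntegrable (fun t : ℝ => t ^ p * (1-t) ^ q) volume (1/2) 1 := by
    rw [intervalIntegrable_iff_integrableOn_Icc_of_le (by norm_num)]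
    have hInt : IntegrableOn (fun t : ℝ => (1-t) ^ q) (Icc ((1:ℝ)/2) 1) volume := by
      have base : IntervalIntegrable (fun t : ℝ => t ^ q) volume 0 (1/2) :=
        intervalIntegral.intervalIntegrable_rpow' hq
      have h := (base.comp_sub_left 1).symm
      norm_num at h
      rw [intervalIntegrable_iff_integrableOn_Icc_of_le (by norm_num)] at h
      exact h
    have hCont : ContinuousOn (fun t : ℝ => t ^ p) (Icc ((1:ℝ)/2) 1) := by
      intro t ht
      exact (Real.continuousAt_rpow_const t p (Or.inl (by simp at ht; nlinarith))).continuousWithinAt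
    exact MeasureTheory.IntegrableOn.continuousOn_mul hCont hInt isCompact_Icc
  exact h1.trans h2

lemma aux_sinIntegrable {r : ℝ} (hr : -1 < r) (m : ℕ) :
    IntervalIntegrable (fun β : ℝ => Real.sin β ^ r * Real.cos β ^ m) volume 0 (Real.pi/2) := by
  rcases le_or_gt 0 r with h0 | h0
  · exact ((Real.continuous_sin.rpow_const fun x => Or.inr h0).mul
      (Real.continuous_cos.pow m)).intervalIntegrable _ _
  · have hpi : (0:ℝ) < Real.pi/2 := by positivity
    rw [intervalIntegrable_iff_integrableOn_Ioo_of_le hpi.le]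
    have hbound : IntegrableOn (fun β : ℝ => (2/Real.pi) ^ r * β ^ r) (Ioo 0 (Real.pi/2)) volume :=
      ((integrableOn_Ioo_rpow_iff hpi).mpr hr).const_mul _
    refine hbound.integrable.mono' ?_ ?_
    · refine (ContinuousOn.mul ?_ (Real.continuous_cos.pow m).continuousOn).aestronglyMeasurable
        measurableSet_Ioo
      intro β hβ
      have hs : 0 < Real.sin β := Real.sin_pos_of_pos_of_lt_pi hβ.1 (by linarith [hβ.2, Real.pi_pos])
      exact ((Real.continuousAt_rpow_const _ r (Or.inl hs.ne')).comp
        Real.continuous_sin.continuousAt).continuousWithinAt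
    · filter_upwards [ae_restrict_mem measurableSet_Ioo] with β hβ
      have hs : 0 < Real.sin β := Real.sin_pos_of_pos_of_lt_pi hβ.1 (by linarith [hβ.2, Real.pi_pos])
      have hc : |Real.cos β| ≤ 1 := Real.abs_cos_le_one β
      have h1 : |Real.sin β ^ r * Real.cos β ^ m| ≤ Real.sin β ^ r := by
        rw [abs_mul, abs_of_pos (Real.rpow_pos_of_pos hs r), abs_pow]
        nlinarith [Real.rpow_pos_of_pos hs r, pow_le_one₀ (n := m) (abs_nonneg (Real.cos β)) hc,
          pow_nonneg (abs_nonneg (Real.cos β)) m]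
      have h2 : Real.sin β ^ r ≤ (2/Real.pi * β) ^ r :=
        Real.rpow_le_rpow_of_nonpos (mul_pos (by positivity) hβ.1)
          (Real.mul_le_sin hβ.1.le (by linarith [hβ.2])) h0.le
      calc ‖Real.sin β ^ r * Real.cos β ^ m‖ ≤ Real.sin β ^ r := h1
        _ ≤ (2/Real.pi * β) ^ r := h2
        _ = (2/Real.pi) ^ r * β ^ r := Real.mul_rpow (by positivity) hβ.1.le

lemma aux_sum_even_odd (f : ℕ → ℝ) (n : ℕ) :
    ∑ k ∈ Finset.range (2*n+1), f k
      = ∑ j ∈ Finset.range (n+1), f (2*j) + ∑ j ∈ Finset.range n, f (2*j+1) := by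
  induction n with
  | zero => simp
  | succ n ih =>
    have h : 2*(n+1)+1 = (2*n+1) + 1 + 1 := by ring
    rw [h, Finset.sum_range_succ, Finset.sum_range_succ, ih,
      Finset.sum_range_succ (fun j => f (2*j)) (n+1),
      Finset.sum_range_succ (fun j => f (2*j+1)) n]
    have e1 : 2*n+1 = 2*n+1 := rfl
    have e2 : 2*n+1+1 = 2*(n+1) := by ring
    rw [e2]
    ring

lemma aux_cos_eq_sum (n : ℕ) (β : ℝ) :
    Real.cos (2*(n:ℝ)*β) = ∑ j ∈ Finset.range (n+1),
      ((2*n).choose (2*j) : ℝ) * (-1)^j * (Real.sin β ^ (2*j) * Real.cos β ^ (2*(n-j))) := by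
  have h0 : Real.cos (2*(n:ℝ)*β) = (Complex.exp ((2*(n:ℝ)*β : ℝ) * Complex.I)).re :=
    (Complex.exp_ofReal_mul_I_re _).symm
  have h1 : Complex.exp ((2*(n:ℝ)*β : ℝ) * Complex.I)
      = ((Real.sin β : ℂ) * Complex.I + (Real.cos β : ℂ)) ^ (2*n) := by
    have hE : ((Real.sin β : ℂ) * Complex.I + (Real.cos β : ℂ))
        = Complex.exp ((β : ℂ) * Complex.I) := by
      rw [Complex.exp_mul_I, ← Complex.ofReal_cos, ← Complex.ofReal_sin]
      ring
    rw [hE, ← Complex.exp_nat_mul]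
    congr 1
    push_cast; ring
  rw [h0, h1, add_pow, Complex.re_sum]
  have hterm : ∀ k, (((Real.sin β : ℂ) * Complex.I) ^ k * (Real.cos β : ℂ) ^ (2*n - k)
        * ((2*n).choose k : ℂ)).re
      = (Real.sin β ^ k * Real.cos β ^ (2*n-k) * ((2*n).choose k : ℝ)) * (Complex.I ^ k).re := by
    intro k
    rw [mul_pow]
    have : (Real.sin β : ℂ) ^ k * Complex.I ^ k * (Real.cos β : ℂ) ^ (2*n - k)
        * ((2*n).choose k : ℂ)
        = ((Real.sin β ^ k * Real.cos β ^ (2*n-k) * ((2*n).choose k : ℝ) : ℝ) : ℂ)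
          * Complex.I ^ k := by
      push_cast; ring
    rw [this, Complex.re_ofReal_mul]
  simp_rw [hterm]
  rw [aux_sum_even_odd (fun k => (Real.sin β ^ k * Real.cos β ^ (2*n-k)
    * ((2*n).choose k : ℝ)) * (Complex.I ^ k).re) n]
  have hodd : ∀ j, (Complex.I ^ (2*j+1)).re = 0 := by
    intro j
    rw [pow_succ, pow_mul, Complex.I_sq,
      show ((-1:ℂ))^j = (((-1:ℝ)^j : ℝ) : ℂ) by push_cast; ring, Complex.re_ofReal_mul]
    simp
  have heven : ∀ j, (Complex.I ^ (2*j)).re = (-1 : ℝ)^j := by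
    intro j
    rw [pow_mul, Complex.I_sq,
      show ((-1:ℂ))^j = (((-1:ℝ)^j : ℝ) : ℂ) by push_cast; ring, Complex.ofReal_re]
  simp only [hodd, mul_zero, Finset.sum_const_zero, add_zero, heven]
  refine Finset.sum_congr rfl fun j hj => ?_
  have hjn : j ≤ n := Nat.lt_succ_iff.mp (Finset.mem_range.mp hj)
  have : 2*n - 2*j = 2*(n-j) := by omega
  rw [this]
  ring

lemma aux_key {x : ℝ} (hx : 0 < x) (hx' : x ≠ 1/2) (m : ℕ) :
    ∫ β in (0:ℝ)..(Real.pi/2), Real.sin β ^ (2*x-1) * Real.cos β ^ (2*m)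
      = (1/2) * Beta x ((m:ℝ) + 1/2) := by
  have hpi : (0:ℝ) < Real.pi/2 := by positivity
  set y : ℝ := (m:ℝ) + 1/2 with hy
  have hy0 : 0 < y := by positivity
  set g : ℝ → ℝ := fun t => t ^ (x-1) * (1-t) ^ (y-1) with hg
  -- pointwise identity on the open interval
  have hpt : ∀ β, 0 < β → β < Real.pi/2 →
      (2 * Real.sin β * Real.cos β) * g (Real.sin β ^ 2)
        = 2 * (Real.sin β ^ (2*x-1) * Real.cos β ^ (2*m)) := by
    intro β h0 h1
    have hs : 0 < Real.sin β := Real.sin_pos_of_pos_of_lt_pi h0 (by linarith [Real.pi_pos])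
    have hc : 0 < Real.cos β := Real.cos_pos_of_mem_Ioo ⟨by linarith [Real.pi_pos], h1⟩
    have e1 : ((Real.sin β ^ 2 : ℝ)) ^ (x-1) = Real.sin β ^ (2*(x-1)) := by
      rw [← Real.rpow_natCast (Real.sin β) 2, ← Real.rpow_mul hs.le]
      norm_num
    have e2 : (1 - Real.sin β ^ 2 : ℝ) = Real.cos β ^ 2 := (Real.cos_sq' β).symm
    have e3 : ((Real.cos β ^ 2 : ℝ)) ^ (y-1) = Real.cos β ^ (2*(y-1)) := by
      rw [← Real.rpow_natCast (Real.cos β) 2, ← Real.rpow_mul hc.le]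
      norm_num
    have e4 : (Real.cos β : ℝ) ^ (2*m : ℕ) = Real.cos β ^ ((2*(m:ℝ)) : ℝ) := by
      rw [← Real.rpow_natCast (Real.cos β) (2*m)]
      push_cast; ring_nf
    simp only [hg]
    rw [e2, e1, e3, e4]
    rw [show (2*x-1 : ℝ) = 1 + 2*(x-1) from by ring,
      show (2*(m:ℝ) : ℝ) = 1 + 2*(y-1) from by rw [hy]; ring,
      Real.rpow_add hs, Real.rpow_add hc, Real.rpow_one, Real.rpow_one]
    ring
  -- integrability of the target integrand
  have hIcomp : IntervalIntegrable
      (fun β => 2 * (Real.sin β ^ (2*x-1) * Real.cos β ^ (2*m))) volume 0 (Real.pi/2) :=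
    (aux_sinIntegrable (by linarith) (2*m)).const_mul 2
  -- the substitution
  have hsub := intervalIntegral.integral_comp_smul_deriv''' (a := (0:ℝ)) (b := Real.pi/2)
    (f := fun β => Real.sin β ^ 2) (f' := fun β => 2 * Real.sin β * Real.cos β)
    (g := g) ?_ ?_ ?_ ?_ ?_
  · rw [show Real.sin 0 ^ 2 = 0 by simp, show Real.sin (Real.pi/2) ^ 2 = 1 by simp] at hsub
    -- replace LHS of hsub by the nicer integrand
    have hae : ∫ β in (0:ℝ)..(Real.pi/2),
        (2 * Real.sin β * Real.cos β) • (g ∘ fun β => Real.sin β ^ 2) β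
        = ∫ β in (0:ℝ)..(Real.pi/2), 2 * (Real.sin β ^ (2*x-1) * Real.cos β ^ (2*m)) := by
      apply intervalIntegral.integral_congr_ae
      filter_upwards [compl_mem_ae_iff.mpr (measure_singleton (Real.pi/2))] with β hβ' hβ
      rw [Set.uIoc_of_le hpi.le] at hβ
      have hβ2 : β < Real.pi/2 := lt_of_le_of_ne hβ.2 (by simpa using hβ')
      simpa [smul_eq_mul, Function.comp] using hpt β hβ.1 hβ2
    rw [hae] at hsub
    rw [intervalIntegral.integral_const_mul] at hsub
    have : Beta x y = ∫ u in (0:ℝ)..1, g u := rfl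
    rw [← this] at hsub
    linarith
  · exact (Real.continuous_sin.pow 2).continuousOn
  · intro β _
    have h := ((Real.hasDerivAt_sin β).pow 2)
    have h2 : ((2:ℕ) : ℝ) * Real.sin β ^ (2-1) * Real.cos β = 2 * Real.sin β * Real.cos β := by
      norm_num
    rw [h2] at h
    exact h.hasDerivWithinAt
  · -- continuity of g on the image
    have himg : ((fun β => Real.sin β ^ 2) ''
        Set.Ioo (min 0 (Real.pi/2)) (max 0 (Real.pi/2))) ⊆ Set.Ioo 0 1 := by
      rintro _ ⟨β, hβ, rfl⟩
      rw [min_eq_left hpi.le, max_eq_right hpi.le] at hβ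
      obtain ⟨hb1, hb2⟩ := hβ
      have hs : 0 < Real.sin β := Real.sin_pos_of_pos_of_lt_pi hb1
        (by linarith [Real.pi_pos])
      have hc : 0 < Real.cos β := Real.cos_pos_of_mem_Ioo ⟨by linarith [Real.pi_pos], hb2⟩
      refine ⟨?_, ?_⟩
      · show (0:ℝ) < Real.sin β ^ 2
        positivity
      · show Real.sin β ^ 2 < 1
        nlinarith [Real.sin_sq_add_cos_sq β]
    refine ContinuousOn.mono ?_ himg
    intro t ht
    refine ContinuousWithinAt.mul ?_ ?_
    · exact (Real.continuousAt_rpow_const t (x-1) (Or.inl ht.1.ne')).continuousWithinAt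
    · exact ((Real.continuousAt_rpow_const (1-t) (y-1)
        (Or.inl (by have := ht.2; intro hc; rw [sub_eq_zero] at hc; linarith))).comp
        ((continuous_const.sub continuous_id).continuousAt)).continuousWithinAt
  · -- integrability of g on the image of the closed interval
    have hIg : IntegrableOn g (Set.Icc (0:ℝ) 1) volume := by
      rw [integrableOn_Icc_iff_integrableOn_Ioc,
        ← intervalIntegrable_iff_integrableOn_Ioc_of_le zero_le_one]
      exact aux_betaIntegrable (by linarith) (by linarith)
    refine hIg.mono_set ?_
    rintro _ ⟨β, hβ, rfl⟩
    exact ⟨sq_nonneg _, Real.sin_sq_le_one β⟩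
  · -- integrability of the pulled-back integrand
    rw [Set.uIcc_of_le hpi.le]
    have hIcomp' : IntegrableOn
        (fun β => 2 * (Real.sin β ^ (2*x-1) * Real.cos β ^ (2*m)))
        (Set.Icc 0 (Real.pi/2)) volume := by
      rw [← intervalIntegrable_iff_integrableOn_Icc_of_le hpi.le]
      exact hIcomp
    refine hIcomp'.congr ?_
    have h0 : ∀ᵐ β : ℝ ∂(volume.restrict (Set.Icc 0 (Real.pi/2))), β ≠ 0 :=
      ae_restrict_of_ae (by
        filter_upwards [compl_mem_ae_iff.mpr (measure_singleton (0:ℝ))] with β hβ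
        simpa using hβ)
    have h1 : ∀ᵐ β : ℝ ∂(volume.restrict (Set.Icc 0 (Real.pi/2))), β ≠ Real.pi/2 :=
      ae_restrict_of_ae (by
        filter_upwards [compl_mem_ae_iff.mpr (measure_singleton (Real.pi/2))] with β hβ
        simpa using hβ)
    filter_upwards [ae_restrict_mem measurableSet_Icc, h0, h1] with β hβ hβ0 hβ1
    have hlt : 0 < β := lt_of_le_of_ne hβ.1 (Ne.symm hβ0)
    have hlt' : β < Real.pi/2 := lt_of_le_of_ne hβ.2 hβ1
    simpa [smul_eq_mul, Function.comp] using (hpt β hlt hlt').symm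

theorem stmt18 (n : ℕ) (hn : 1 ≤ n) (α : ℝ) (hα0 : 0 < α) (hα1 : α < 1) :
    (∫ β in (0:ℝ)..(Real.pi/2), Real.cos (2*(n:ℝ)*β) / (Real.sin β) ^ α)
      = (1/2) * ∑ j ∈ Finset.range (n+1),
          ((2*n).choose (2*j) : ℝ) * (-1)^j *
            Beta ((j:ℝ) + (1-α)/2) ((n:ℝ) - (j:ℝ) + 1/2) := by
  have hpi : (0:ℝ) < Real.pi/2 := by positivity
  -- Step 1: rewrite the integrand as a finite sum
  have hcongr : ∀ β ∈ Set.uIcc (0:ℝ) (Real.pi/2),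
      Real.cos (2*(n:ℝ)*β) / (Real.sin β) ^ α
        = ∑ j ∈ Finset.range (n+1), ((2*n).choose (2*j) : ℝ) * (-1)^j
            * (Real.sin β ^ ((2*j : ℝ) - α) * Real.cos β ^ (2*(n-j))) := by
    intro β hβ
    rw [Set.uIcc_of_le hpi.le] at hβ
    rcases eq_or_lt_of_le hβ.1 with h0 | h0
    · -- β = 0
      rw [← h0]
      simp only [Real.sin_zero]
      rw [Real.zero_rpow hα0.ne', div_zero]
      symm
      refine Finset.sum_eq_zero fun j hj => ?_
      have : (0:ℝ) ^ ((2*j : ℝ) - α) = 0 := by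
        apply Real.zero_rpow
        intro hc
        rcases Nat.eq_zero_or_pos j with h | h
        · subst h; simp at hc; linarith
        · have h1 : (1:ℝ) ≤ (j:ℝ) := by exact_mod_cast h
          linarith
      rw [this]
      ring
    · -- 0 < β
      have hs : 0 < Real.sin β := Real.sin_pos_of_pos_of_lt_pi h0
        (by linarith [hβ.2, Real.pi_pos])
      rw [aux_cos_eq_sum, Finset.sum_div]
      refine Finset.sum_congr rfl fun j hj => ?_
      have key : Real.sin β ^ (2*j) / Real.sin β ^ α = Real.sin β ^ ((2*j : ℝ) - α) := by
        rw [← Real.rpow_natCast (Real.sin β) (2*j), ← Real.rpow_sub hs]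
        congr 1
        push_cast; ring
      rw [mul_div_assoc,
        show Real.sin β ^ (2*j) * Real.cos β ^ (2*(n-j)) / Real.sin β ^ α
          = (Real.sin β ^ (2*j) / Real.sin β ^ α) * Real.cos β ^ (2*(n-j)) from by ring,
        key]
  rw [intervalIntegral.integral_congr hcongr]
  -- Step 2: exchange sum and integral
  have hint : ∀ j ∈ Finset.range (n+1),
      IntervalIntegrable (fun β => ((2*n).choose (2*j) : ℝ) * (-1)^j
        * (Real.sin β ^ ((2*j : ℝ) - α) * Real.cos β ^ (2*(n-j)))) volume 0 (Real.pi/2) := by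
    intro j _
    exact (aux_sinIntegrable (by
      have : (0:ℝ) ≤ (j:ℝ) := Nat.cast_nonneg j
      nlinarith) (2*(n-j))).const_mul _
  rw [intervalIntegral.integral_finset_sum hint]
  rw [Finset.mul_sum]
  refine Finset.sum_congr rfl fun j hj => ?_
  have hjn : j ≤ n := Nat.lt_succ_iff.mp (Finset.mem_range.mp hj)
  rw [intervalIntegral.integral_const_mul]
  have hx : (0:ℝ) < (j:ℝ) + (1-α)/2 := by
    have : (0:ℝ) ≤ (j:ℝ) := Nat.cast_nonneg j
    nlinarith
  have hx' : (j:ℝ) + (1-α)/2 ≠ 1/2 := by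
    rcases Nat.eq_zero_or_pos j with h | h
    · subst h; simp; intro h'; nlinarith
    · have : (1:ℝ) ≤ (j:ℝ) := by exact_mod_cast h
      nlinarith
  have hexp : 2*((j:ℝ) + (1-α)/2) - 1 = (2*j : ℝ) - α := by ring
  have := aux_key hx hx' (n - j)
  rw [hexp] at this
  rw [this]
  have hcast : ((n - j : ℕ) : ℝ) + 1/2 = (n:ℝ) - (j:ℝ) + 1/2 := by
    rw [Nat.cast_sub hjn]
  rw [hcast]
  ring
end
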